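/- arXiv:1802.03552 — 7 statements merged into one kernel-verified Lean document; each statement's English description precedes it below -/
import Mathlib

section
/- The subgroup commutativity degree of the dihedral group $D_8$ of order 8 equals $23/25$. -/
open scoped Pointwise

/-- The subgroup commutativity degree of a group: the probability that two
subgroups permute (their setwise product in either order is equal). -/
noncomputable def sd (G : Type*) [Group G] : ℚ :=
  (Nat.card {pr : Subgroup G × Subgroup G //
      (pr.1 : Set G) * (pr.2 : Set G) = (pr.2 : Set G) * (pr.1 : Set G)} : ℚ) /
    (Nat.card (Subgroup G) : ℚ) ^ 2

private abbrev G8 := DihedralGroup 4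

private def IsSubF (s : Finset G8) : Prop :=
  (1 : G8) ∈ s ∧ (∀ a ∈ s, ∀ b ∈ s, a * b ∈ s) ∧ (∀ a ∈ s, a⁻¹ ∈ s)

private instance : DecidablePred IsSubF := fun s => by unfold IsSubF; infer_instance

private noncomputable def e8 : Subgroup G8 ≃ {s : Finset G8 // IsSubF s} where
  toFun H := ⟨(Set.toFinite (H : Set G8)).toFinset, by
    refine ⟨?_, ?_, ?_⟩ <;> simp only [Set.Finite.mem_toFinset, SetLike.mem_coe]
    · exact H.one_mem
    · exact fun a ha b hb => H.mul_mem ha hb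
    · exact fun a ha => H.inv_mem ha⟩
  invFun s := { carrier := ↑s.1
                one_mem' := s.2.1
                mul_mem' := fun {a b} ha hb => s.2.2.1 a ha b hb
                inv_mem' := fun {a} ha => s.2.2.2 a ha }
  left_inv H := by ext x; simp [Set.Finite.mem_toFinset]
  right_inv s := by ext x; simp [Set.Finite.mem_toFinset]

private lemma e8_coe (H : Subgroup G8) : ((e8 H : Finset G8) : Set G8) = (H : Set G8) := by
  simp [e8]

private noncomputable def e8' :
    {pr : Subgroup G8 × Subgroup G8 //
      (pr.1 : Set G8) * (pr.2 : Set G8) = (pr.2 : Set G8) * (pr.1 : Set G8)} ≃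
    {p : {s : Finset G8 // IsSubF s} × {s : Finset G8 // IsSubF s} //
      (p.1.1 : Finset G8) * p.2.1 = p.2.1 * p.1.1} :=
  Equiv.subtypeEquiv (e8.prodCongr e8) (by
    intro pr
    constructor
    · intro h
      apply Finset.coe_injective
      push_cast
      simp only [Equiv.prodCongr_apply, Prod.map_fst, Prod.map_snd, e8_coe]
      exact h
    · intro h
      have := congrArg (fun s : Finset G8 => (s : Set G8)) h
      simpa only [Equiv.prodCongr_apply, Prod.map_fst, Prod.map_snd, Finset.coe_mul, e8_coe]
        using this)

theorem sd_dihedralGroup_four : sd (DihedralGroup 4) = 23 / 25 := by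
  have h1 : Nat.card (Subgroup G8) = 10 := by
    rw [Nat.card_congr e8, Nat.card_eq_fintype_card]
    decide
  have h2 : Nat.card {pr : Subgroup G8 × Subgroup G8 //
      (pr.1 : Set G8) * (pr.2 : Set G8) = (pr.2 : Set G8) * (pr.1 : Set G8)} = 92 := by
    rw [Nat.card_congr e8', Nat.card_eq_fintype_card]
    set_option maxRecDepth 10000 in decide
  unfold sd
  rw [h1, h2]
  norm_num
end

section
/- For every odd prime $r$, the subgroup commutativity degree of the dihedral group $D_{2r}$ of order $2r$ equals $\frac{7r + 9}{(r+3)^2}$. -/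
open scoped Pointwise

namespace SDAux

open DihedralGroup
variable {n : ℕ}

def Rot (n : ℕ) : Subgroup (DihedralGroup n) where
  carrier := Set.range DihedralGroup.r
  one_mem' := ⟨0, rfl⟩
  mul_mem' := by rintro _ _ ⟨i, rfl⟩ ⟨j, rfl⟩; exact ⟨i + j, rfl⟩
  inv_mem' := by rintro _ ⟨i, rfl⟩; exact ⟨-i, rfl⟩

def Ref (i : ZMod n) : Subgroup (DihedralGroup n) where
  carrier := {1, DihedralGroup.sr i}
  one_mem' := Or.inl rfl
  mul_mem' := by
    rintro a b (rfl | ha) (rfl | hb)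
    · simp
    · simp_all
    · simp_all
    · simp only [Set.mem_singleton_iff] at ha hb
      subst ha; subst hb
      simp
  inv_mem' := by
    rintro a (rfl | ha)
    · simp
    · simp only [Set.mem_singleton_iff] at ha
      subst ha
      right; rfl

theorem mem_Rot {x : DihedralGroup n} : x ∈ Rot n ↔ ∃ i, DihedralGroup.r i = x := Iff.rfl

theorem mem_Ref {i : ZMod n} {x : DihedralGroup n} :
    x ∈ Ref i ↔ x = 1 ∨ x = DihedralGroup.sr i := Iff.rfl

theorem r_pow (i : ZMod n) (k : ℕ) :
    (DihedralGroup.r i) ^ k = DihedralGroup.r ((k : ZMod n) * i) := by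
  induction k with
  | zero => simp
  | succ k ih => rw [pow_succ, ih]; simp [r_mul_r]; ring_nf

theorem rot_le [hp : Fact n.Prime] {H : Subgroup (DihedralGroup n)} {i : ZMod n}
    (hi : i ≠ 0) (h : DihedralGroup.r i ∈ H) : Rot n ≤ H := by
  rintro _ ⟨m, rfl⟩
  have : DihedralGroup.r m = (DihedralGroup.r i) ^ ((m * i⁻¹).val) := by
    rw [r_pow, ZMod.natCast_val, ZMod.cast_id]
    congr 1
    field_simp
  rw [this]
  exact pow_mem h _

theorem subgroup_eq [hp : Fact n.Prime] (H : Subgroup (DihedralGroup n)) :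
    H = ⊥ ∨ H = ⊤ ∨ H = Rot n ∨ ∃ i, H = Ref i := by
  by_cases hR : ∃ i, i ≠ 0 ∧ DihedralGroup.r i ∈ H
  · obtain ⟨i, hi0, hiH⟩ := hR
    have hRle : Rot n ≤ H := rot_le hi0 hiH
    by_cases hs : ∃ j, DihedralGroup.sr j ∈ H
    · obtain ⟨j, hj⟩ := hs
      right; left
      rw [eq_top_iff]
      rintro (m | m) -
      · exact hRle ⟨m, rfl⟩
      · have : DihedralGroup.sr j * DihedralGroup.r (m - j) = DihedralGroup.sr m := by
          simp
        rw [← this]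
        exact mul_mem hj (hRle ⟨m - j, rfl⟩)
    · right; right; left
      apply le_antisymm _ hRle
      rintro (m | m) hm
      · exact ⟨m, rfl⟩
      · exact absurd ⟨m, hm⟩ hs
  · push_neg at hR
    by_cases hs : ∃ j, DihedralGroup.sr j ∈ H
    · obtain ⟨j, hj⟩ := hs
      right; right; right
      refine ⟨j, le_antisymm ?_ ?_⟩
      · rintro (m | m) hm
        · rcases eq_or_ne m 0 with rfl | hm0
          · exact mem_Ref.mpr (Or.inl one_def.symm)
          · exact absurd hm (hR m hm0)
        · have hmul : DihedralGroup.sr m * DihedralGroup.sr j = DihedralGroup.r (j - m) := by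
            simp
          have hrm : DihedralGroup.r (j - m) ∈ H := hmul ▸ mul_mem hm hj
          rcases eq_or_ne (j - m) 0 with he | hne
          · have hjm : j = m := sub_eq_zero.mp he
            subst hjm
            exact mem_Ref.mpr (Or.inr rfl)
          · exact absurd hrm (hR _ hne)
      · intro x hx
        rcases mem_Ref.mp hx with rfl | rfl
        · exact one_mem H
        · exact hj
    · left
      rw [eq_bot_iff]
      rintro (m | m) hm
      · rcases eq_or_ne m 0 with rfl | hm0
        · simp [Subgroup.mem_bot, ← one_def]
        · exact absurd hm (hR m hm0)
      · exact absurd ⟨m, hm⟩ hs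
instance rot_normal : (Rot n).Normal := by
  constructor
  rintro _ ⟨i, rfl⟩ g
  rcases g with j | j
  · refine ⟨i, ?_⟩
    have h1 : (DihedralGroup.r j)⁻¹ = DihedralGroup.r (-j) := rfl
    rw [h1]
    simp only [r_mul_r]
    congr 1
    ring
  · refine ⟨-i, ?_⟩
    have h1 : (DihedralGroup.sr j)⁻¹ = DihedralGroup.sr j := rfl
    rw [h1]
    simp only [sr_mul_r, sr_mul_sr]
    congr 1
    ring

theorem comm_bot_left (K : Subgroup (DihedralGroup n)) :
    ((⊥ : Subgroup (DihedralGroup n)) : Set (DihedralGroup n)) * K =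
      (K : Set (DihedralGroup n)) * (⊥ : Subgroup (DihedralGroup n)) := by
  simp [Subgroup.coe_bot, Set.singleton_mul, Set.mul_singleton]

theorem comm_top_left (K : Subgroup (DihedralGroup n)) :
    ((⊤ : Subgroup (DihedralGroup n)) : Set (DihedralGroup n)) * K =
      (K : Set (DihedralGroup n)) * (⊤ : Subgroup (DihedralGroup n)) := by
  have hne : (K : Set (DihedralGroup n)).Nonempty := ⟨1, K.one_mem⟩
  rw [Subgroup.coe_top, Set.univ_mul hne, Set.mul_univ hne]

theorem comm_rot_left (K : Subgroup (DihedralGroup n)) :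
    ((Rot n : Subgroup (DihedralGroup n)) : Set (DihedralGroup n)) * K =
      (K : Set (DihedralGroup n)) * Rot n :=
  (Subgroup.set_mul_normal_comm (K : Set (DihedralGroup n)) (Rot n)).symm

theorem two_ne_zero' [hp : Fact n.Prime] (hodd : Odd n) : (2 : ZMod n) ≠ 0 := by
  intro h
  have h2 : ((2 : ℕ) : ZMod n) = 0 := by push_cast; exact h
  rw [ZMod.natCast_eq_zero_iff] at h2
  have := (Nat.prime_dvd_prime_iff_eq hp.out Nat.prime_two).mp h2
  subst this
  exact (Nat.not_odd_iff_even.mpr even_two) hodd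

theorem comm_ref_iff [hp : Fact n.Prime] (hodd : Odd n) (i j : ZMod n) :
    ((Ref i : Set (DihedralGroup n)) * Ref j = (Ref j : Set (DihedralGroup n)) * Ref i) ↔
      i = j := by
  constructor
  · intro h
    have hmem : DihedralGroup.r (j - i) ∈ (Ref i : Set (DihedralGroup n)) * Ref j := by
      have he : DihedralGroup.sr i * DihedralGroup.sr j = DihedralGroup.r (j - i) := by simp
      exact he ▸ Set.mul_mem_mul (mem_Ref.mpr (Or.inr rfl)) (mem_Ref.mpr (Or.inr rfl))
    rw [h] at hmem
    obtain ⟨x, hx, y, hy, hxy⟩ := hmem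
    rw [SetLike.mem_coe, mem_Ref] at hx hy
    rcases hx with rfl | rfl <;> rcases hy with rfl | rfl <;>
      simp only [one_mul, mul_one, sr_mul_sr] at hxy
    · rw [one_def] at hxy
      have : (0 : ZMod n) = j - i := by injection hxy
      linear_combination this
    · exact absurd hxy (by simp)
    · exact absurd hxy (by simp)
    · have h2 : i - j = j - i := by injection hxy
      have h3 : (2 : ZMod n) * (i - j) = 0 := by linear_combination h2
      rcases mul_eq_zero.mp h3 with h4 | h4
      · exact absurd h4 (two_ne_zero' hodd)
      · linear_combination h4
  · rintro rfl; rfl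

def f (n : ℕ) : ZMod n ⊕ Fin 3 → Subgroup (DihedralGroup n)
  | .inl i => Ref i
  | .inr ⟨0, _⟩ => ⊥
  | .inr ⟨1, _⟩ => Rot n
  | .inr ⟨2, _⟩ => ⊤

@[simp] theorem f_inl (i : ZMod n) : f n (.inl i) = Ref i := rfl
@[simp] theorem f_inr0 : f n (.inr 0) = ⊥ := rfl
@[simp] theorem f_inr1 : f n (.inr 1) = Rot n := rfl
@[simp] theorem f_inr2 : f n (.inr 2) = ⊤ := rfl

theorem f_injective [hp : Fact n.Prime] : Function.Injective (f n) := by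
  haveI : Fact (1 < n) := ⟨hp.out.one_lt⟩
  have hr1_bot : DihedralGroup.r 1 ∉ (⊥ : Subgroup (DihedralGroup n)) := by
    simp only [Subgroup.mem_bot, one_def]
    intro h
    exact one_ne_zero (by injection h)
  have hr1_ref : ∀ i : ZMod n, DihedralGroup.r 1 ∉ Ref i := by
    intro i h
    rcases mem_Ref.mp h with h | h
    · rw [one_def] at h
      exact one_ne_zero (α := ZMod n) (by injection h)
    · cases h
  have hsr_rot : ∀ i : ZMod n, DihedralGroup.sr i ∉ Rot n := by
    rintro i ⟨m, h⟩
    cases h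
  have hsr_bot : ∀ i : ZMod n, DihedralGroup.sr i ∉ (⊥ : Subgroup (DihedralGroup n)) := by
    intro i h
    rw [Subgroup.mem_bot, one_def] at h
    cases h
  have hsr_ref : ∀ i : ZMod n, DihedralGroup.sr i ∈ Ref i := fun i => mem_Ref.mpr (Or.inr rfl)
  have hr1_rot : DihedralGroup.r 1 ∈ Rot n := ⟨1, rfl⟩
  rintro (i | k) (j | l) hab
  · have hab' : Ref i = Ref j := hab
    have := hab' ▸ hsr_ref i
    rcases mem_Ref.mp this with h | h
    · rw [one_def] at h
      exact absurd h (fun hh => by cases hh)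
    · have : i = j := by injection h
      rw [this]
  · exfalso
    fin_cases l
    · have hab' : Ref i = (⊥ : Subgroup (DihedralGroup n)) := hab
      exact hsr_bot i (hab' ▸ hsr_ref i)
    · have hab' : Ref i = Rot n := hab
      exact hsr_rot i (hab' ▸ hsr_ref i)
    · have hab' : Ref i = (⊤ : Subgroup (DihedralGroup n)) := hab
      exact hr1_ref i (hab'.symm ▸ Subgroup.mem_top _)
  · exfalso
    fin_cases k
    · have hab' : (⊥ : Subgroup (DihedralGroup n)) = Ref j := hab
      exact hsr_bot j (hab'.symm ▸ hsr_ref j)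
    · have hab' : Rot n = Ref j := hab
      exact hsr_rot j (hab'.symm ▸ hsr_ref j)
    · have hab' : (⊤ : Subgroup (DihedralGroup n)) = Ref j := hab
      exact hr1_ref j (hab' ▸ Subgroup.mem_top _)
  · congr 1
    fin_cases k <;> fin_cases l
    · rfl
    · have hab' : (⊥ : Subgroup (DihedralGroup n)) = Rot n := hab
      exact absurd (hab' ▸ hr1_rot) hr1_bot
    · have hab' : (⊥ : Subgroup (DihedralGroup n)) = ⊤ := hab
      exact absurd (hab' ▸ Subgroup.mem_top (DihedralGroup.r 1)) hr1_bot
    · have hab' : Rot n = (⊥ : Subgroup (DihedralGroup n)) := hab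
      exact absurd (hab' ▸ hr1_rot) hr1_bot
    · rfl
    · have hab' : Rot n = (⊤ : Subgroup (DihedralGroup n)) := hab
      exact absurd (hab' ▸ Subgroup.mem_top (DihedralGroup.sr 0)) (hsr_rot 0)
    · have hab' : (⊤ : Subgroup (DihedralGroup n)) = (⊥ : Subgroup (DihedralGroup n)) := hab
      exact absurd (hab' ▸ Subgroup.mem_top (DihedralGroup.r 1)) hr1_bot
    · have hab' : (⊤ : Subgroup (DihedralGroup n)) = Rot n := hab
      exact absurd (hab' ▸ Subgroup.mem_top (DihedralGroup.sr 0)) (hsr_rot 0)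
    · rfl

theorem f_surjective [hp : Fact n.Prime] : Function.Surjective (f n) := by
  intro H
  rcases subgroup_eq H with rfl | rfl | rfl | ⟨i, rfl⟩
  · exact ⟨.inr 0, rfl⟩
  · exact ⟨.inr 2, rfl⟩
  · exact ⟨.inr 1, rfl⟩
  · exact ⟨.inl i, rfl⟩

section Count

variable (n : ℕ)

/-- the "good" predicate on index pairs -/
def R' (a : (ZMod n ⊕ Fin 3) × (ZMod n ⊕ Fin 3)) : Prop :=
  ∀ i j : ZMod n, a.1 = Sum.inl i → a.2 = Sum.inl j → i = j

theorem P_iff_R' [hp : Fact n.Prime] (hodd : Odd n)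
    (a : (ZMod n ⊕ Fin 3) × (ZMod n ⊕ Fin 3)) :
    ((f n a.1 : Set (DihedralGroup n)) * f n a.2 =
      (f n a.2 : Set (DihedralGroup n)) * f n a.1) ↔ R' n a := by
  obtain ⟨x, y⟩ := a
  rcases x with i | k
  · rcases y with j | l
    · simp only [f_inl]
      rw [comm_ref_iff hodd]
      constructor
      · rintro rfl i' j' h1 h2
        cases h1; cases h2; rfl
      · intro h
        exact h i j rfl rfl
    · constructor
      · rintro - i' j' - h2
        exact absurd h2 (by simp)
      · intro _
        dsimp only
        fin_cases l
        · exact (comm_bot_left (f n (Sum.inl i))).symm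
        · exact (comm_rot_left (f n (Sum.inl i))).symm
        · exact (comm_top_left (f n (Sum.inl i))).symm
  · constructor
    · rintro - i' j' h1 -
      exact absurd h1 (by simp)
    · intro _
      dsimp only
      fin_cases k
      · exact comm_bot_left (f n y)
      · exact comm_rot_left (f n y)
      · exact comm_top_left (f n y)

theorem card_not_R' [hp : Fact n.Prime] :
    Nat.card {a : (ZMod n ⊕ Fin 3) × (ZMod n ⊕ Fin 3) // ¬ R' n a} = n * n - n := by
  classical
  have hg : Function.Bijective
      (fun q : {q : ZMod n × ZMod n // q.1 ≠ q.2} =>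
        (⟨(Sum.inl q.1.1, Sum.inl q.1.2), fun h => q.2 (h _ _ rfl rfl)⟩ :
          {a : (ZMod n ⊕ Fin 3) × (ZMod n ⊕ Fin 3) // ¬ R' n a})) := by
    constructor
    · rintro ⟨⟨a1, a2⟩, ha⟩ ⟨⟨b1, b2⟩, hb⟩ h
      simp only [Subtype.mk.injEq, Prod.mk.injEq, Sum.inl.injEq] at h
      exact Subtype.ext (Prod.ext h.1 h.2)
    · rintro ⟨⟨a, b⟩, hn⟩
      simp only [R', not_forall] at hn
      obtain ⟨i, j, h1, h2, hij⟩ := hn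
      subst h1; subst h2
      exact ⟨⟨(i, j), hij⟩, rfl⟩
  rw [← Nat.card_congr (Equiv.ofBijective _ hg)]
  have : Nat.card {q : ZMod n × ZMod n // q.1 ≠ q.2} = n * n - n := by
    rw [Nat.card_eq_fintype_card]
    rw [Fintype.card_subtype_compl (fun q : ZMod n × ZMod n => q.1 = q.2)]
    have hdiag : Fintype.card {q : ZMod n × ZMod n // q.1 = q.2} = n := by
      rw [Fintype.card_eq_nat_card]
      rw [Nat.card_congr
        (⟨fun q => q.1.1, fun i => ⟨(i, i), rfl⟩,
          by rintro ⟨⟨a, b⟩, h⟩; cases h; rfl, fun i => rfl⟩ :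
          {q : ZMod n × ZMod n // q.1 = q.2} ≃ ZMod n)]
      simp [Nat.card_eq_fintype_card]
    rw [hdiag, Fintype.card_prod, ZMod.card]
  exact this

theorem card_R' [hp : Fact n.Prime] :
    Nat.card {a : (ZMod n ⊕ Fin 3) × (ZMod n ⊕ Fin 3) // R' n a} = 7 * n + 9 := by
  classical
  rw [Nat.card_eq_fintype_card]
  have e1 : Fintype.card {a : (ZMod n ⊕ Fin 3) × (ZMod n ⊕ Fin 3) // R' n a} =
      Fintype.card {a : (ZMod n ⊕ Fin 3) × (ZMod n ⊕ Fin 3) // ¬ ¬ R' n a} :=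
    Fintype.card_congr (Equiv.subtypeEquivRight fun a => (not_not).symm)
  rw [e1, Fintype.card_subtype_compl]
  have h1 : Fintype.card {a : (ZMod n ⊕ Fin 3) × (ZMod n ⊕ Fin 3) // ¬ R' n a} =
      n * n - n := by
    rw [← Nat.card_eq_fintype_card]; exact card_not_R' n
  have htot : Fintype.card ((ZMod n ⊕ Fin 3) × (ZMod n ⊕ Fin 3)) = n * n + 6 * n + 9 := by
    simp only [Fintype.card_prod, Fintype.card_sum, ZMod.card, Fintype.card_fin]
    ring
  rw [h1, htot]
  have hsq : n ≤ n * n := Nat.le_mul_of_pos_left n hp.out.pos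
  generalize n * n = m at hsq ⊢
  omega

theorem card_subgroup [hp : Fact n.Prime] :
    Nat.card (Subgroup (DihedralGroup n)) = n + 3 := by
  rw [← Nat.card_congr (Equiv.ofBijective (f n) ⟨f_injective, f_surjective⟩)]
  rw [Nat.card_sum]
  simp [Nat.card_eq_fintype_card, ZMod.card]

theorem card_pairs [hp : Fact n.Prime] (hodd : Odd n) :
    Nat.card {pr : Subgroup (DihedralGroup n) × Subgroup (DihedralGroup n) //
      (pr.1 : Set (DihedralGroup n)) * (pr.2 : Set (DihedralGroup n)) =
        (pr.2 : Set (DihedralGroup n)) * (pr.1 : Set (DihedralGroup n))} = 7 * n + 9 := by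
  let e : (ZMod n ⊕ Fin 3) ≃ Subgroup (DihedralGroup n) :=
    Equiv.ofBijective (f n) ⟨f_injective, f_surjective⟩
  have hiff : ∀ a : (ZMod n ⊕ Fin 3) × (ZMod n ⊕ Fin 3),
      R' n a ↔ (((e.prodCongr e) a).1 : Set (DihedralGroup n)) * (((e.prodCongr e) a).2 : Set (DihedralGroup n)) =
        (((e.prodCongr e) a).2 : Set (DihedralGroup n)) * (((e.prodCongr e) a).1 : Set (DihedralGroup n)) := by
    intro a
    have h2 : ((e.prodCongr e) a) = (f n a.1, f n a.2) := rfl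
    rw [h2]
    exact (P_iff_R' n hodd a).symm
  calc Nat.card {pr : Subgroup (DihedralGroup n) × Subgroup (DihedralGroup n) //
      (pr.1 : Set (DihedralGroup n)) * (pr.2 : Set (DihedralGroup n)) =
        (pr.2 : Set (DihedralGroup n)) * (pr.1 : Set (DihedralGroup n))}
      = Nat.card {a : (ZMod n ⊕ Fin 3) × (ZMod n ⊕ Fin 3) // R' n a} :=
        Nat.card_congr ((e.prodCongr e).subtypeEquiv hiff).symm
    _ = 7 * n + 9 := card_R' n

end Count

end SDAux

theorem sd_dihedralGroup_odd_prime (r : ℕ) (hr : r.Prime) (hodd : Odd r) :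
    sd (DihedralGroup r) = (7 * r + 9) / (r + 3) ^ 2 := by
  haveI : Fact r.Prime := ⟨hr⟩
  unfold sd
  rw [SDAux.card_pairs r hodd, SDAux.card_subgroup r]
  push_cast
  ring
end

section
/- The subgroup commutativity degree of the alternating group $A_4$ equals $16/25$. -/
open scoped Pointwise

namespace SdAux

variable {G : Type*} [Group G] [Fintype G] [DecidableEq G]

def p (s : Finset G) : Prop :=
  (1 : G) ∈ s ∧ (∀ a ∈ s, a⁻¹ ∈ s) ∧ ∀ a ∈ s, ∀ b ∈ s, a * b ∈ s

instance : DecidablePred (p (G := G)) := fun s => by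
  unfold p
  exact @instDecidableAnd _ _ inferInstance (@instDecidableAnd _ _ inferInstance inferInstance)

def sgF (G : Type*) [Group G] [Fintype G] [DecidableEq G] : Finset (Finset G) :=
  Finset.univ.filter p

def ofFin (s : Finset G) (hs : p s) : Subgroup G where
  carrier := ↑s
  one_mem' := hs.1
  inv_mem' := fun {a} ha => hs.2.1 a ha
  mul_mem' := fun {a b} ha hb => hs.2.2 a ha b hb

noncomputable def toFin (H : Subgroup G) : Finset G :=
  letI := Classical.dec
  (H : Set G).toFinset

lemma mem_toFin {H : Subgroup G} {x : G} : x ∈ toFin H ↔ x ∈ H := by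
  classical
  simp [toFin, Set.mem_toFinset]

lemma coe_toFin (H : Subgroup G) : (↑(toFin H) : Set G) = (H : Set G) := by
  ext x; simp [mem_toFin]

lemma p_toFin (H : Subgroup G) : p (toFin H) :=
  ⟨mem_toFin.mpr H.one_mem, fun a ha => mem_toFin.mpr (H.inv_mem (mem_toFin.mp ha)),
    fun a ha b hb => mem_toFin.mpr (H.mul_mem (mem_toFin.mp ha) (mem_toFin.mp hb))⟩

lemma toFin_mem (H : Subgroup G) : toFin H ∈ sgF G :=
  Finset.mem_filter.mpr ⟨Finset.mem_univ _, p_toFin H⟩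

noncomputable def sgEquiv : Subgroup G ≃ {s // s ∈ sgF G} where
  toFun H := ⟨toFin H, toFin_mem H⟩
  invFun s := ofFin s.1 (Finset.mem_filter.mp s.2).2
  left_inv H := by ext x; simp [ofFin, mem_toFin]
  right_inv s := by ext x; simp [ofFin, mem_toFin]

lemma card_subgroup : Nat.card (Subgroup G) = (sgF G).card := by
  rw [Nat.card_congr (sgEquiv (G := G)), Nat.card_eq_fintype_card, Fintype.card_coe]

def cF (G : Type*) [Group G] [Fintype G] [DecidableEq G] : Finset (Finset G × Finset G) :=
  (sgF G ×ˢ sgF G).filter fun q => q.1 * q.2 = q.2 * q.1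

lemma comm_iff (H K : Subgroup G) :
    (H : Set G) * (K : Set G) = (K : Set G) * (H : Set G) ↔
      toFin H * toFin K = toFin K * toFin H := by
  rw [← Finset.coe_inj, Finset.coe_mul, Finset.coe_mul, coe_toFin, coe_toFin]

noncomputable def pairEquiv :
    {pr : Subgroup G × Subgroup G //
        (pr.1 : Set G) * (pr.2 : Set G) = (pr.2 : Set G) * (pr.1 : Set G)} ≃
      {q // q ∈ cF G} where
  toFun pr := ⟨(toFin pr.1.1, toFin pr.1.2), Finset.mem_filter.mpr
    ⟨Finset.mem_product.mpr ⟨toFin_mem _, toFin_mem _⟩, (comm_iff _ _).mp pr.2⟩⟩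
  invFun q :=
    letI h := Finset.mem_filter.mp q.2
    letI h1 := Finset.mem_product.mp h.1
    ⟨(ofFin q.1.1 (Finset.mem_filter.mp h1.1).2, ofFin q.1.2 (Finset.mem_filter.mp h1.2).2), by
      have := h.2
      rw [← Finset.coe_inj, Finset.coe_mul, Finset.coe_mul] at this
      exact this⟩
  left_inv pr := by
    refine Subtype.ext (Prod.ext ?_ ?_) <;>
      · ext x; simp [ofFin, mem_toFin]
  right_inv q := by
    refine Subtype.ext (Prod.ext ?_ ?_) <;>
      · ext x; simp [ofFin, mem_toFin]

lemma card_pairs :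
    Nat.card {pr : Subgroup G × Subgroup G //
        (pr.1 : Set G) * (pr.2 : Set G) = (pr.2 : Set G) * (pr.1 : Set G)} = (cF G).card := by
  rw [Nat.card_congr (pairEquiv (G := G)), Nat.card_eq_fintype_card, Fintype.card_coe]

set_option maxHeartbeats 10000000 in
set_option maxRecDepth 1000000 in
lemma sgF_card : (sgF (alternatingGroup (Fin 4))).card = 10 := by decide

set_option maxHeartbeats 10000000 in
set_option maxRecDepth 1000000 in
lemma cF_card : (cF (alternatingGroup (Fin 4))).card = 64 := by decide

end SdAux

theorem sd_alternatingGroup_four : sd (alternatingGroup (Fin 4)) = 16 / 25 := by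
  rw [sd, SdAux.card_pairs, SdAux.card_subgroup, SdAux.sgF_card, SdAux.cF_card]
  norm_num
end

section
/- Let $S_1 = P_1 \rtimes Q_1$ where $P_1$ is an elementary abelian $p$-group of order $p^r$, $Q_1$ is cyclic of order $q$ (distinct primes $p, q$), $Q_1$ acts on $P_1$ so that $P_1$ is a minimal normal subgroup of $S_1$ and all proper subgroups of $S_1$ are nilpotent (i.e., $S_1$ is a Schmidt group). Then $S_1$ has no subgroup of order $p^i q$ for any $1 \leq i \leq r-1$. -/
open scoped Pointwise

variable {G : Type*} [Group G] [Finite G] {p q r : ℕ} {P Q : Subgroup G}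

/-- Any `p`-subgroup is contained in a normal Sylow `p`-subgroup. -/
private lemma le_of_normal_sylow {G : Type*} [Group G] [Finite G] {p : ℕ} [Fact p.Prime]
    (S : Sylow p G) (hS : (S : Subgroup G).Normal) {K : Subgroup G} (hK : IsPGroup p K) :
    K ≤ (S : Subgroup G) := by
  obtain ⟨T, hT⟩ := hK.exists_le_sylow
  haveI := Sylow.unique_of_normal S hS
  rwa [Subsingleton.elim T S] at hT

/-- A Schmidt group which is a semidirect product of an elementary abelian minimal
normal `p`-subgroup of order `p ^ r` and a cyclic group of prime order `q` has no
subgroup of order `p ^ i * q` for `1 ≤ i ≤ r - 1`. -/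
theorem schmidt_no_middle_subgroups (hp : p.Prime) (hq : q.Prime) (hpq : p ≠ q) (hr : 1 ≤ r)
    (hPnorm : P.Normal) (hPcard : Nat.card P = p ^ r)
    (hPab : ∀ a b : P, a * b = b * a) (hPelem : ∀ a : P, a ^ p = 1)
    (hQcard : Nat.card Q = q)
    (hsup : P ⊔ Q = ⊤) (hinf : P ⊓ Q = ⊥)
    (hmin : ∀ N : Subgroup G, N.Normal → N ≤ P → N = ⊥ ∨ N = P)
    (hnotnil : ¬ Group.IsNilpotent G)
    (hschmidt : ∀ H : Subgroup G, H ≠ ⊤ → Group.IsNilpotent H) :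
    ∀ i, 1 ≤ i → i ≤ r - 1 → ∀ H : Subgroup G, Nat.card H ≠ p ^ i * q := by
  intro i hi1 hir H hcard
  haveI : Fact p.Prime := ⟨hp⟩
  haveI : Fact q.Prime := ⟨hq⟩
  haveI := hPnorm
  -- cardinality of G
  have hcomp : Subgroup.IsComplement' P Q :=
    Subgroup.isComplement'_of_disjoint_and_mul_eq_univ (disjoint_iff.mpr hinf)
      (by rw [← Subgroup.normal_mul, hsup, Subgroup.coe_top])
  have hG : Nat.card G = p ^ r * q := by rw [← hcomp.card_mul, hPcard, hQcard]
  have hiltr : i < r := lt_of_le_of_lt hir (Nat.sub_lt (lt_of_lt_of_le one_pos hr) one_pos)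
  -- factorization facts
  have hfq : ∀ m : ℕ, (p ^ m * q).factorization q = 1 := by
    intro m
    rw [Nat.factorization_mul (pow_ne_zero m hp.pos.ne') hq.pos.ne', hp.factorization_pow,
      hq.factorization]
    simp [Finsupp.single_apply, hpq]
  have hfp : ∀ m : ℕ, (p ^ m * q).factorization p = m := by
    intro m
    rw [Nat.factorization_mul (pow_ne_zero m hp.pos.ne') hq.pos.ne', hp.factorization_pow,
      hq.factorization]
    simp [Finsupp.single_apply, hpq, Ne.symm hpq]
  -- H is proper, hence nilpotent
  have hHne : H ≠ ⊤ := by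
    intro h
    rw [h, Subgroup.card_top, hG] at hcard
    have := Nat.eq_of_mul_eq_mul_right hq.pos hcard.symm
    exact absurd (Nat.pow_right_injective hp.two_le this) hiltr.ne
  have hnil := hschmidt H hHne
  -- Sylow subgroups of H
  obtain ⟨Sq⟩ : Nonempty (Sylow q H) := inferInstance
  obtain ⟨Sp⟩ : Nonempty (Sylow p H) := inferInstance
  have hSyl := ((isNilpotent_of_finite_tfae (G := H)).out 0 3).mp hnil
  have hSqN : (Sq : Subgroup H).Normal := hSyl q ⟨hq⟩ Sq
  have hSpN : (Sp : Subgroup H).Normal := hSyl p ⟨hp⟩ Sp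
  have hSqcard : Nat.card (Sq : Subgroup H) = q := by
    rw [Sq.card_eq_multiplicity, hcard, hfq i, pow_one]
  -- an element of order p in H
  haveI : Fintype H := Fintype.ofFinite _
  obtain ⟨x, hx⟩ := exists_prime_orderOf_dvd_card (G := H) p
    (by rw [← Nat.card_eq_fintype_card, hcard]
        exact Dvd.dvd.mul_right (dvd_pow_self p (Nat.one_le_iff_ne_zero.mp hi1)) q)
  have hxSp : Subgroup.zpowers x ≤ (Sp : Subgroup H) :=
    le_of_normal_sylow Sp hSpN (IsPGroup.of_card (by rw [Nat.card_zpowers, hx, pow_one]))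
  have hcommH : ∀ v ∈ (Sq : Subgroup H), Commute x v := fun v hv =>
    Subgroup.commute_of_normal_of_disjoint _ _ hSpN hSqN
      (IsPGroup.disjoint_of_ne p q hpq _ _ Sp.isPGroup' Sq.isPGroup')
      x v (hxSp (Subgroup.mem_zpowers x)) hv
  -- move to G
  set x' : G := (x : G) with hx'def
  have hx'ord : orderOf x' = p := by
    rw [← hx]; exact orderOf_injective H.subtype H.subtype_injective x
  have hx'ne : x' ≠ 1 := by
    intro h
    rw [h, orderOf_one] at hx'ord
    exact hp.ne_one hx'ord.symm
  set Q1 : Subgroup G := (Sq : Subgroup H).map H.subtype with hQ1def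
  have hQ1card : Nat.card Q1 = q := by
    rw [← hSqcard]
    exact (Nat.card_congr
      ((Sq : Subgroup H).equivMapOfInjective H.subtype H.subtype_injective).toEquiv).symm
  -- the Sylow q-subgroup of G containing Q1
  have hQ1p : IsPGroup q Q1 := IsPGroup.of_card (by rw [hQ1card, pow_one])
  obtain ⟨T, hT⟩ := hQ1p.exists_le_sylow
  have hTcard : Nat.card (T : Subgroup G) = q := by
    rw [T.card_eq_multiplicity, hG, hfq r, pow_one]
  have hQ1T : Q1 = (T : Subgroup G) :=
    Subgroup.eq_of_le_of_card_ge hT (by rw [hTcard, hQ1card])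
  -- Q itself is a Sylow q-subgroup
  let Qsyl : Sylow q G := Sylow.ofCard Q (by rw [hQcard, hG, hfq r, pow_one])
  obtain ⟨g, hg⟩ := MulAction.exists_smul_eq G T Qsyl
  have hTQ : MulAut.conj g • (T : Subgroup G) = Q := by
    have h1 := congrArg (fun S : Sylow q G => (S : Subgroup G)) hg
    simpa [Sylow.smul_def, Sylow.pointwise_smul_def, Qsyl] using h1
  have hmemT : ∀ u ∈ Q, g⁻¹ * u * g ∈ Q1 := by
    intro u hu
    rw [hQ1T]
    rw [← hTQ, Subgroup.mem_pointwise_smul_iff_inv_smul_mem] at hu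
    simpa [MulAut.smul_def, ← map_inv, mul_assoc] using hu
  -- x' lies in P
  have hx'P : x' ∈ P := by
    have : Subgroup.zpowers x' ≤ P := by
      have := le_of_normal_sylow (Sylow.ofCard P (by rw [hPcard, hG, hfp r]))
        (by simpa using hPnorm)
        (K := Subgroup.zpowers x')
        (IsPGroup.of_card (by rw [Nat.card_zpowers, hx'ord, pow_one]))
      simpa using this
    exact this (Subgroup.mem_zpowers x')
  -- y is a nontrivial element of P centralizing Q
  set y : G := g * x' * g⁻¹ with hydef
  have hyP : y ∈ P := hPnorm.conj_mem x' hx'P g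
  have hyne : y ≠ 1 := by
    intro h
    apply hx'ne
    have : g⁻¹ * (g * x' * g⁻¹) * g = g⁻¹ * 1 * g := by rw [← hydef, h]
    simpa [mul_assoc] using this
  have hycomm : ∀ u ∈ Q, u * y = y * u := by
    intro u hu
    obtain ⟨v, hvSq, hveq⟩ := Subgroup.mem_map.mp (hmemT u hu)
    have hc : Commute (g⁻¹ * u * g) x' := by
      have := (hcommH v hvSq).symm
      have h2 : (v : G) * x' = x' * (v : G) := congrArg Subtype.val this
      rw [show (H.subtype v : G) = (v : G) from rfl] at hveq
      rw [hveq] at h2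
      exact h2
    have hc2 := hc.map (MulAut.conj g).toMonoidHom
    have e1 : (MulAut.conj g).toMonoidHom (g⁻¹ * u * g) = u := by
      simp [MulAut.conj_apply, mul_assoc]
    have e2 : (MulAut.conj g).toMonoidHom x' = y := by
      simp [MulAut.conj_apply, hydef]
    rw [e1, e2] at hc2
    exact hc2
  -- the centralizer of Q in P is a normal subgroup of G
  set C : Subgroup G := P ⊓ Subgroup.centralizer (Q : Set G) with hCdef
  have hyC : y ∈ C := ⟨hyP, Subgroup.mem_centralizer_iff.mpr hycomm⟩
  have hCnorm : C.Normal := by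
    constructor
    intro n hn g0
    suffices h : g0 * n * g0⁻¹ = n by rw [h]; exact hn
    have hg0 : g0 ∈ (P : Set G) * Q := by
      rw [← Subgroup.normal_mul, hsup, Subgroup.coe_top]; trivial
    obtain ⟨a, ha, b, hb, rfl⟩ := hg0
    have hbn : b * n = n * b := Subgroup.mem_centralizer_iff.mp hn.2 b hb
    have han : a * n = n * a := congrArg Subtype.val (hPab ⟨a, ha⟩ ⟨n, hn.1⟩)
    have h1 : b * n * b⁻¹ = n := by rw [hbn, mul_inv_cancel_right]
    have h2 : a * n * a⁻¹ = n := by rw [han, mul_inv_cancel_right]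
    calc a * b * n * (a * b)⁻¹ = a * (b * n * b⁻¹) * a⁻¹ := by group
      _ = n := by rw [h1, h2]
  -- by minimality, P centralizes Q
  have hPle : P ≤ Subgroup.centralizer (Q : Set G) := by
    rcases hmin C hCnorm inf_le_left with h | h
    · exfalso; apply hyne; simpa [h] using hyC
    · exact inf_eq_left.mp h
  -- hence G is commutative, contradicting non-nilpotency
  have hQab : ∀ u v : Q, (u : G) * v = (v : G) * u := by
    haveI : IsCyclic Q := isCyclic_of_prime_card hQcard
    letI : CommGroup Q := IsCyclic.commGroup
    intro u v
    exact congrArg Subtype.val (mul_comm u v)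
  have hcommG : ∀ g1 g2 : G, g1 * g2 = g2 * g1 := by
    intro g1 g2
    have hmem : ∀ g : G, g ∈ (P : Set G) * Q := by
      intro g
      rw [← Subgroup.normal_mul, hsup, Subgroup.coe_top]; trivial
    obtain ⟨a1, ha1, b1, hb1, rfl⟩ := hmem g1
    obtain ⟨a2, ha2, b2, hb2, rfl⟩ := hmem g2
    have c_aa : Commute a1 a2 := congrArg Subtype.val (hPab ⟨a1, ha1⟩ ⟨a2, ha2⟩)
    have c_bb : Commute b1 b2 := hQab ⟨b1, hb1⟩ ⟨b2, hb2⟩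
    have c_a1b2 : Commute a1 b2 :=
      (show Commute b2 a1 from Subgroup.mem_centralizer_iff.mp (hPle ha1) b2 hb2).symm
    have c_b1a2 : Commute b1 a2 :=
      Subgroup.mem_centralizer_iff.mp (hPle ha2) b1 hb1
    exact (c_aa.mul_right c_a1b2).mul_left ((c_b1a2).mul_right c_bb)
  exact hnotnil (@CommGroup.isNilpotent G { mul_comm := hcommG })
end

section
/- Let $S_1 = P_1 \rtimes Q_1$ be a Schmidt group with $P_1$ elementary abelian of order $p^r$ and $Q_1$ cyclic of prime order $q$, where $P_1$ is a minimal normal subgroup. Then the total number of subgroups of $S_1$ is $a_{r,p} + p^r + 1$, where $a_{r,p}$ is the total number of subgroups of the elementary abelian group of order $p^r$. -/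
open scoped Pointwise

variable {G : Type*} [Group G] [Finite G] {p q r : ℕ} {P Q : Subgroup G}

private lemma subgroup_eq_of_le_of_card_le {H K : Subgroup G} (h : H ≤ K)
    (hc : Nat.card K ≤ Nat.card H) : H = K := by
  apply SetLike.ext' (Set.eq_of_subset_of_ncard_le h ?_ (Set.toFinite _))
  rwa [← Nat.card_coe_set_eq, ← Nat.card_coe_set_eq]

private lemma card_dvd_index_of_inf_eq_bot {K : Subgroup G} (hPn : P.Normal) (h : K ⊓ P = ⊥) :
    Nat.card K ∣ P.index := by
  haveI := hPn
  rw [Subgroup.index_eq_card]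
  apply Subgroup.card_dvd_of_injective ((QuotientGroup.mk' P).comp K.subtype)
  intro a b hab
  simp only [MonoidHom.comp_apply, QuotientGroup.mk'_apply] at hab
  rw [QuotientGroup.eq] at hab
  have hK : (a : G)⁻¹ * b ∈ K ⊓ P := ⟨mul_mem (K.inv_mem a.2) b.2, hab⟩
  rw [h, Subgroup.mem_bot] at hK
  exact Subtype.ext (inv_mul_eq_one.mp hK)

private lemma index_eq_card_of_compl (hPn : P.Normal) (hsup : P ⊔ Q = ⊤)
    (hinf : P ⊓ Q = ⊥) : P.index = Nat.card Q := by
  haveI := hPn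
  rw [Subgroup.index_eq_card]
  refine (Nat.card_congr (Equiv.ofBijective ((QuotientGroup.mk' P).comp Q.subtype)
    ⟨?_, ?_⟩)).symm
  · intro a b hab
    simp only [MonoidHom.comp_apply, QuotientGroup.mk'_apply] at hab
    rw [QuotientGroup.eq] at hab
    have hK : (a : G)⁻¹ * b ∈ P ⊓ Q := ⟨hab, mul_mem (Q.inv_mem a.2) b.2⟩
    rw [hinf, Subgroup.mem_bot] at hK
    exact Subtype.ext (inv_mul_eq_one.mp hK)
  · intro x
    refine QuotientGroup.induction_on x ?_
    intro g
    have hg : g ∈ (↑(P ⊔ Q) : Set G) := by rw [hsup]; trivial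
    rw [Subgroup.normal_mul, Set.mem_mul] at hg
    obtain ⟨a, ha, b, hb, rfl⟩ := hg
    refine ⟨⟨b, hb⟩, ?_⟩
    simp only [MonoidHom.comp_apply, QuotientGroup.mk'_apply]
    rw [QuotientGroup.eq]
    simpa [mul_assoc] using hPn.conj_mem a ha b⁻¹

/-- The number of subgroups of such a Schmidt group is `a + p ^ r + 1` where `a` is
the number of subgroups of its Sylow `p`-subgroup. -/
theorem schmidt_card_subgroups (hp : p.Prime) (hq : q.Prime) (hpq : p ≠ q) (hr : 1 ≤ r)
    (hPnorm : P.Normal) (hPcard : Nat.card P = p ^ r)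
    (hPab : ∀ a b : P, a * b = b * a) (hPelem : ∀ a : P, a ^ p = 1)
    (hQcard : Nat.card Q = q)
    (hsup : P ⊔ Q = ⊤) (hinf : P ⊓ Q = ⊥)
    (hmin : ∀ N : Subgroup G, N.Normal → N ≤ P → N = ⊥ ∨ N = P)
    (hnotnil : ¬ Group.IsNilpotent G)
    (hschmidt : ∀ H : Subgroup G, H ≠ ⊤ → Group.IsNilpotent H) :
    Nat.card (Subgroup G) = Nat.card (Subgroup P) + p ^ r + 1 := by
  classical
  haveI hpF : Fact p.Prime := ⟨hp⟩
  haveI hqF : Fact q.Prime := ⟨hq⟩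
  haveI := hPnorm
  have hPidx : P.index = q := by rw [index_eq_card_of_compl hPnorm hsup hinf, hQcard]
  have hG : Nat.card G = p ^ r * q := by
    rw [← Subgroup.card_mul_index P, hPcard, hPidx]
  have hprpos : (p ^ r : ℕ) ≠ 0 := pow_ne_zero _ hp.pos.ne'
  have hfp : (Nat.card G).factorization p = r := by
    rw [hG, Nat.factorization_mul hprpos hq.pos.ne', Nat.Prime.factorization_pow hp,
      hq.factorization]
    simp [Finsupp.single_apply, hpq, (Ne.symm hpq)]
  have hfq : (Nat.card G).factorization q = 1 := by
    rw [hG, Nat.factorization_mul hprpos hq.pos.ne', Nat.Prime.factorization_pow hp,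
      hq.factorization]
    simp [Finsupp.single_apply, hpq, (Ne.symm hpq)]
  -- C_P(Q) is trivial
  have hC : P ⊓ Subgroup.centralizer (Q : Set G) = ⊥ := by
    set C := P ⊓ Subgroup.centralizer (Q : Set G) with hCdef
    have hCcenter : C ≤ Subgroup.center G := by
      rintro c ⟨hcP, hcQ⟩
      rw [Subgroup.mem_center_iff]
      have hPc : ∀ x ∈ P, x * c = c * x := by
        intro x hx
        exact congrArg Subtype.val (hPab ⟨x, hx⟩ ⟨c, hcP⟩)
      have htop : (⊤ : Subgroup G) ≤ Subgroup.centralizer {c} := by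
        rw [← hsup]
        refine sup_le ?_ ?_
        · intro x hx
          rw [Subgroup.mem_centralizer_singleton_iff]
          exact hPc x hx
        · intro x hx
          rw [Subgroup.mem_centralizer_singleton_iff]
          exact Subgroup.mem_centralizer_iff.mp hcQ x hx
      intro g
      have := htop (Subgroup.mem_top g)
      rw [Subgroup.mem_centralizer_singleton_iff] at this
      exact this
    have hCnormal : C.Normal := by
      constructor
      intro n hn g
      have hz := Subgroup.mem_center_iff.mp (hCcenter hn) g
      have : g * n * g⁻¹ = n := by rw [hz, mul_assoc, mul_inv_cancel, mul_one]
      rwa [this]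
    rcases hmin C hCnormal inf_le_left with h | h
    · exact h
    · exfalso
      apply hnotnil
      have hPcent : P ≤ Subgroup.centralizer (Q : Set G) :=
        (le_of_eq h.symm).trans inf_le_right
      haveI hQcyc : IsCyclic Q := isCyclic_of_prime_card hQcard
      letI : CommGroup ↥Q := IsCyclic.commGroup
      have hmem : ∀ g : G, ∃ a ∈ P, ∃ b ∈ Q, a * b = g := by
        intro g
        have hg : g ∈ (↑(P ⊔ Q) : Set G) := by rw [hsup]; trivial
        rwa [Subgroup.normal_mul, Set.mem_mul] at hg
      have hcomm : ∀ x y : G, x * y = y * x := by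
        intro x y
        obtain ⟨a, ha, b, hb, rfl⟩ := hmem x
        obtain ⟨c, hc, d, hd, rfl⟩ := hmem y
        have hPP : ∀ u v : G, u ∈ P → v ∈ P → Commute u v := fun u v hu hv =>
          congrArg Subtype.val (hPab ⟨u, hu⟩ ⟨v, hv⟩)
        have hPQ : ∀ u v : G, u ∈ P → v ∈ Q → Commute u v := fun u v hu hv =>
          ((Subgroup.mem_centralizer_iff.mp (hPcent hu)) v hv).symm
        have hQQ : ∀ u v : G, u ∈ Q → v ∈ Q → Commute u v := fun u v hu hv =>
          congrArg Subtype.val (mul_comm (⟨u, hu⟩ : Q) ⟨v, hv⟩)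
        exact ((hPP a c ha hc).mul_right (hPQ a d ha hd)).mul_left
          (((hPQ c b hc hb).symm).mul_right (hQQ b d hb hd))
      exact ⟨⟨1, by
        rw [upperCentralSeries_one]
        exact top_unique fun g _ => Subgroup.mem_center_iff.mpr fun h => hcomm h g⟩⟩
  -- normalizer of Q is Q
  have hNP : Subgroup.normalizer (Q : Set G) ⊓ P = ⊥ := by
    rw [eq_bot_iff]
    rintro x ⟨hxN, hxP⟩
    rw [Subgroup.mem_bot]
    have hxC : x ∈ Subgroup.centralizer (Q : Set G) := by
      rw [Subgroup.mem_centralizer_iff]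
      intro y hy
      have h1 : x⁻¹ * y⁻¹ * x ∈ Q := by
        simpa [mul_assoc] using
          (Subgroup.mem_normalizer_iff.mp (inv_mem hxN) y⁻¹).mp (inv_mem hy)
      have h2 : y⁻¹ * x * y ∈ P := by
        simpa [mul_assoc] using hPnorm.conj_mem x hxP y⁻¹
      have hu : x⁻¹ * y⁻¹ * x * y ∈ P ⊓ Q := by
        constructor
        · have := P.mul_mem (P.inv_mem hxP) h2
          simpa [mul_assoc] using this
        · exact Q.mul_mem h1 hy
      rw [hinf, Subgroup.mem_bot] at hu
      have := congrArg (fun w => y * (x * w)) hu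
      simpa [mul_assoc] using this.symm
    have hx : x ∈ P ⊓ Subgroup.centralizer (Q : Set G) := ⟨hxP, hxC⟩
    rwa [hC, Subgroup.mem_bot] at hx
  have hNQ : Subgroup.normalizer (Q : Set G) = Q := by
    have hd : Nat.card (Subgroup.normalizer (Q : Set G)) ∣ q := by
      have := card_dvd_index_of_inf_eq_bot hPnorm hNP
      rwa [hPidx] at this
    have hq' : q ∣ Nat.card (Subgroup.normalizer (Q : Set G)) :=
      hQcard ▸ Subgroup.card_dvd_of_le Subgroup.le_normalizer
    refine (subgroup_eq_of_le_of_card_le Subgroup.le_normalizer ?_).symm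
    rw [Nat.dvd_antisymm hd hq', hQcard]
  -- every p-subgroup is contained in P
  have key_pgroup : ∀ H : Subgroup G, ¬ q ∣ Nat.card H → H ≤ P := by
    intro H hqd
    have hdvd : Nat.card H ∣ p ^ r * q := hG ▸ Subgroup.card_subgroup_dvd_card H
    have hcop : Nat.Coprime (Nat.card H) q :=
      ((Nat.Prime.coprime_iff_not_dvd hq).mpr hqd).symm
    have hdp : Nat.card H ∣ p ^ r := hcop.dvd_of_dvd_mul_right hdvd
    obtain ⟨k, hkr, hk⟩ := (Nat.dvd_prime_pow hp).mp hdp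
    have hpg : IsPGroup p H := IsPGroup.of_card hk
    obtain ⟨S, hS⟩ := hpg.exists_le_sylow
    haveI : Unique (Sylow p G) :=
      Sylow.unique_of_normal (Sylow.ofCard P (by rw [hPcard, hfp])) hPnorm
    have hSP : S = Sylow.ofCard P (by rw [hPcard, hfp]) := Subsingleton.elim _ _
    rw [hSP] at hS
    exact hS
  -- classification of subgroups not below P
  have htri : ∀ H : Subgroup G, ¬ H ≤ P → H ≠ ⊤ → Nat.card H = q := by
    intro H hHP hHtop
    have hqd : q ∣ Nat.card H := by
      by_contra h
      exact hHP (key_pgroup H h)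
    haveI hHnil : Group.IsNilpotent ↥H := hschmidt H hHtop
    have hfHq : (Nat.card H).factorization q = 1 := by
      have hpos : Nat.card H ≠ 0 := Nat.card_pos.ne'
      have hle : (Nat.card H).factorization q ≤ (Nat.card G).factorization q :=
        (Nat.factorization_le_iff_dvd hpos Nat.card_pos.ne').mpr
          (Subgroup.card_subgroup_dvd_card H) q
      have hge : 0 < (Nat.card H).factorization q :=
        Nat.Prime.factorization_pos_of_dvd hq hpos hqd
      omega
    obtain ⟨R'⟩ : Nonempty (Sylow q ↥H) := inferInstance
    have hR'card : Nat.card (R' : Subgroup ↥H) = q := by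
      rw [Sylow.card_eq_multiplicity, hfHq, pow_one]
    have hR'norm : (R' : Subgroup ↥H).Normal := by
      have h34 := ((isNilpotent_of_finite_tfae (G := ↥H)).out 0 3).mp hHnil
      exact h34 q ⟨hq⟩ R'
    have hP'norm : (P.subgroupOf H).Normal := hPnorm.subgroupOf H
    have hdisj : Disjoint (P.subgroupOf H) (R' : Subgroup ↥H) := by
      rw [disjoint_iff]
      apply Subgroup.inf_eq_bot_of_coprime
      have h1 : Nat.card (P.subgroupOf H) ∣ p ^ r := by
        have he : Nat.card (P.subgroupOf H)
            = Nat.card ((P.subgroupOf H).map H.subtype) :=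
          Nat.card_congr
            (Subgroup.equivMapOfInjective _ _ (Subgroup.subtype_injective H)).toEquiv
        rw [he, Subgroup.subgroupOf_map_subtype]
        exact hPcard ▸ Subgroup.card_dvd_of_le inf_le_left
      rw [hR'card]
      obtain ⟨k, hkr, hk⟩ := (Nat.dvd_prime_pow hp).mp h1
      rw [hk]
      exact Nat.Coprime.pow_left k ((Nat.coprime_primes hp hq).mpr hpq)
    have hcomm := Subgroup.commute_of_normal_of_disjoint _ _ hP'norm hR'norm hdisj
    have hHP_bot : H ⊓ P = ⊥ := by
      rw [eq_bot_iff]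
      rintro x ⟨hxH, hxP⟩
      rw [Subgroup.mem_bot]
      set R : Subgroup G := (R' : Subgroup ↥H).map H.subtype with hRdef
      have hRcard : Nat.card R = q := by
        rw [hRdef, ← Nat.card_congr
          (Subgroup.equivMapOfInjective _ _ (Subgroup.subtype_injective H)).toEquiv,
          hR'card]
      have hxR : ∀ y ∈ R, x * y = y * x := by
        rintro y ⟨y', hy', rfl⟩
        have hxP' : (⟨x, hxH⟩ : ↥H) ∈ P.subgroupOf H := hxP
        exact congrArg Subtype.val (hcomm ⟨x, hxH⟩ y' hxP' hy')
      obtain ⟨g, hg⟩ := MulAction.exists_smul_eq G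
        (Sylow.ofCard Q (by rw [hQcard, hfq, pow_one]))
        (Sylow.ofCard R (by rw [hRcard, hfq, pow_one]))
      have hg' : MulAut.conj g • Q = R := by
        have h2 := congrArg (fun S : Sylow q G => (S : Subgroup G)) hg
        simp only [Sylow.coe_subgroup_smul, Sylow.coe_ofCard] at h2
        exact h2
      have hyP : g⁻¹ * x * g ∈ P := by
        simpa [mul_assoc] using hPnorm.conj_mem x hxP g⁻¹
      have hyC : g⁻¹ * x * g ∈ Subgroup.centralizer (Q : Set G) := by
        rw [Subgroup.mem_centralizer_iff]
        intro z hz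
        have hzR : g * z * g⁻¹ ∈ R := by
          rw [← hg']
          have := Subgroup.smul_mem_pointwise_smul z (MulAut.conj g) Q hz
          simpa [MulAut.conj_apply, mul_assoc] using this
        have hcx := hxR _ hzR
        have := congrArg (fun w => g⁻¹ * w * g) hcx
        simpa [mul_assoc] using this.symm
      have hy : g⁻¹ * x * g ∈ P ⊓ Subgroup.centralizer (Q : Set G) := ⟨hyP, hyC⟩
      rw [hC, Subgroup.mem_bot] at hy
      have := congrArg (fun w => g * w * g⁻¹) hy
      simpa [mul_assoc] using this
    have hd : Nat.card H ∣ q := by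
      have := card_dvd_index_of_inf_eq_bot hPnorm hHP_bot
      rwa [hPidx] at this
    exact Nat.dvd_antisymm hd hqd
  -- converse facts
  have hcharQ : ∀ H : Subgroup G, Nat.card H = q → ¬ H ≤ P := by
    intro H hcard hle
    have h1 : (q : ℕ) ∣ p ^ r := by
      rw [← hcard, ← hPcard]
      exact Subgroup.card_dvd_of_le hle
    have h2 := hq.dvd_of_dvd_pow h1
    exact hpq ((Nat.prime_dvd_prime_iff_eq hq hp).mp h2).symm
  have hPneTop : P ≠ ⊤ := by
    intro h
    have hQle : Q ≤ P := h ▸ le_top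
    have hQbot : Q = ⊥ := by rw [← inf_eq_right.mpr hQle, hinf]
    rw [hQbot, Subgroup.card_bot] at hQcard
    exact hq.one_lt.ne' hQcard.symm
  -- counting
  have hsplit1 : Nat.card (Subgroup G) =
      Nat.card {H : Subgroup G // H ≤ P} + Nat.card {H : Subgroup G // ¬ H ≤ P} := by
    rw [← Nat.card_sum]
    exact (Nat.card_congr (Equiv.sumCompl _)).symm
  have e1 : Subgroup ↥P ≃ {H : Subgroup G // H ≤ P} :=
    { toFun := fun K => ⟨K.map P.subtype, Subgroup.map_subtype_le K⟩
      invFun := fun H => H.1.subgroupOf P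
      left_inv := fun K =>
        Subgroup.comap_map_eq_self_of_injective (Subgroup.subtype_injective P) K
      right_inv := fun H => Subtype.ext (by
        dsimp only
        rw [Subgroup.subgroupOf_map_subtype, inf_eq_left.mpr H.2]) }
  have hdisj' : Disjoint (fun H : Subgroup G => Nat.card H = q)
      (fun H : Subgroup G => H = ⊤) := by
    rw [Pi.disjoint_iff]
    intro H
    rw [Prop.disjoint_iff]
    rintro ⟨hq1, rfl⟩
    have hcardtop : Nat.card (⊤ : Subgroup G) = Nat.card G :=
      Nat.card_congr Subgroup.topEquiv.toEquiv
    rw [hcardtop, hG] at hq1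
    have hp2 : p ≤ p ^ r := Nat.le_self_pow (by omega) p
    nlinarith [hq.pos, hp.two_le]
  have e4 : {H : Subgroup G // ¬ H ≤ P} ≃
      {H : Subgroup G // Nat.card H = q} ⊕ {H : Subgroup G // H = ⊤} :=
    (Equiv.subtypeEquivRight fun H => by
        constructor
        · intro h
          by_cases ht : H = ⊤
          · exact Or.inr ht
          · exact Or.inl (htri H h ht)
        · rintro (h | rfl)
          · exact hcharQ H h
          · intro hle
            exact hPneTop (top_le_iff.mp hle)).trans
      (subtypeOrEquiv _ _ hdisj')
  haveI : Unique {H : Subgroup G // H = ⊤} :=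
    ⟨⟨⟨⊤, rfl⟩⟩, fun x => Subtype.ext x.2⟩
  have htopcard : Nat.card {H : Subgroup G // H = ⊤} = 1 := Nat.card_unique
  have e3 : {H : Subgroup G // Nat.card H = q} ≃ Sylow q G :=
    { toFun := fun H => Sylow.ofCard H.1 (by rw [H.2, hfq, pow_one])
      invFun := fun S => ⟨S.1, by
        rw [Sylow.card_eq_multiplicity S, hfq, pow_one]⟩
      left_inv := fun H => Subtype.ext rfl
      right_inv := fun S => rfl }
  have hSylowCard : Nat.card (Sylow q G) = p ^ r := by
    rw [Sylow.card_eq_index_normalizer (Sylow.ofCard Q (by rw [hQcard, hfq, pow_one]))]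
    have hcoe : ((Sylow.ofCard Q (by rw [hQcard, hfq, pow_one]) : Sylow q G) : Set G)
        = (Q : Set G) := rfl
    rw [hcoe, hNQ]
    have hmi : Nat.card Q * Q.index = Nat.card G := Subgroup.card_mul_index Q
    rw [hQcard, hG, mul_comm (p ^ r) q] at hmi
    exact Nat.eq_of_mul_eq_mul_left hq.pos hmi
  rw [hsplit1, (Nat.card_congr e1).symm, Nat.card_congr e4, Nat.card_sum,
    Nat.card_congr e3, hSylowCard, htopcard]
  ring
end

section
/- Let $S_1 = P_1 \rtimes Q_1$ be a Schmidt group with $P_1$ elementary abelian of order $p^r$ (a minimal normal subgroup) and $Q_1$ cyclic of prime order $q$, and let $a = a_{r,p}$ be the number of subgroups of $P_1$. Then the subgroup commutativity degree of $S_1$ equals $\frac{a^2 + 2a + 7p^r + 1}{(a + p^r + 1)^2}$. -/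
open scoped Pointwise

variable {G : Type*} [Group G] [Finite G] {p q r : ℕ} {P Q : Subgroup G}

set_option linter.unusedSectionVars false
set_option linter.unusedVariables false

lemma Pindex (hinf : P ⊓ Q = ⊥) (hsup : P ⊔ Q = ⊤) (hPnorm : P.Normal)
    (hQcard : Nat.card Q = q) : P.index = q := by
  rw [Subgroup.index_eq_card, ← hQcard]
  refine (Nat.card_eq_of_bijective ((QuotientGroup.mk' P).comp Q.subtype) ⟨?_, ?_⟩).symm
  · rw [← MonoidHom.ker_eq_bot_iff]
    have : ((QuotientGroup.mk' P).comp Q.subtype).ker = P.subgroupOf Q := by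
      ext x
      simp [QuotientGroup.eq_one_iff, Subgroup.mem_subgroupOf]
    rw [this, Subgroup.subgroupOf_eq_bot]
    rw [disjoint_iff]
    exact hinf
  · intro z
    obtain ⟨g, rfl⟩ := QuotientGroup.mk'_surjective P z
    have hg : g ∈ (↑(P ⊔ Q) : Set G) := by rw [hsup]; trivial
    rw [Subgroup.normal_mul] at hg
    obtain ⟨x, hx, y, hy, rfl⟩ := hg
    refine ⟨⟨y, hy⟩, ?_⟩
    show QuotientGroup.mk y = QuotientGroup.mk (x * y)
    rw [QuotientGroup.mk_mul, (QuotientGroup.eq_one_iff x).mpr hx, one_mul]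

lemma cardG (hinf : P ⊓ Q = ⊥) (hsup : P ⊔ Q = ⊤) (hPnorm : P.Normal)
    (hPcard : Nat.card P = p ^ r) (hQcard : Nat.card Q = q) : Nat.card G = p ^ r * q := by
  rw [← hPcard, ← Pindex hinf hsup hPnorm hQcard, Subgroup.card_mul_index]

set_option linter.unusedSectionVars false

lemma factp (hp : p.Prime) (hq : q.Prime) (hpq : p ≠ q) :
    (p ^ r * q).factorization p = r := by
  rw [Nat.factorization_mul (pow_ne_zero _ hp.pos.ne') hq.pos.ne']
  simp [hp.factorization_pow, hq.factorization, Finsupp.single_apply, hpq, Ne.symm hpq]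

lemma factq (hp : p.Prime) (hq : q.Prime) (hpq : p ≠ q) :
    (p ^ r * q).factorization q = 1 := by
  rw [Nat.factorization_mul (pow_ne_zero _ hp.pos.ne') hq.pos.ne']
  simp [hp.factorization_pow, hq.factorization, Finsupp.single_apply, hpq, Ne.symm hpq]

lemma pgroup_le (hp : p.Prime) (hq : q.Prime) (hpq : p ≠ q) (hG : Nat.card G = p ^ r * q)
    (hPnorm : P.Normal) (hPcard : Nat.card P = p ^ r)
    {H : Subgroup G} (hH : IsPGroup p H) : H ≤ P := by
  haveI : Fact p.Prime := ⟨hp⟩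
  have hPc : Nat.card P = p ^ (Nat.card G).factorization p := by
    rw [hG, factp hp hq hpq, hPcard]
  let Ps : Sylow p G := Sylow.ofCard P hPc
  haveI : Unique (Sylow p G) := Sylow.unique_of_normal Ps (by
    show (Ps : Subgroup G).Normal
    rw [Sylow.coe_ofCard]
    exact hPnorm)
  obtain ⟨S, hle⟩ := hH.exists_le_sylow
  have hS : S = Ps := Subsingleton.elim _ _
  rw [hS] at hle
  rwa [show (Ps : Subgroup G) = P from Sylow.coe_ofCard P hPc] at hle

lemma q_conj (hp : p.Prime) (hq : q.Prime) (hpq : p ≠ q) (hG : Nat.card G = p ^ r * q)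
    (hQcard : Nat.card Q = q) {K : Subgroup G} (hK : Nat.card K = q) :
    ∃ g : G, MulAut.conj g • Q = K := by
  haveI : Fact q.Prime := ⟨hq⟩
  have h1 : (Nat.card G).factorization q = 1 := by rw [hG]; exact factq hp hq hpq
  have hQc : Nat.card Q = q ^ (Nat.card G).factorization q := by rw [h1, pow_one, hQcard]
  have hKc : Nat.card K = q ^ (Nat.card G).factorization q := by rw [h1, pow_one, hK]
  obtain ⟨g, hg⟩ := MulAction.exists_smul_eq G (Sylow.ofCard Q hQc) (Sylow.ofCard K hKc)
  refine ⟨g, ?_⟩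
  have := congrArg (fun S : Sylow q G => (S : Subgroup G)) hg
  exact this

lemma nilpotent_of_Qnormal (hp : p.Prime) (hq : q.Prime) (hpq : p ≠ q)
    (hG : Nat.card G = p ^ r * q) (hPnorm : P.Normal) (hPcard : Nat.card P = p ^ r)
    (hQcard : Nat.card Q = q) (hQnorm : Q.Normal) : Group.IsNilpotent G := by
  refine ((isNilpotent_of_finite_tfae (G := G)).out 0 3).mpr ?_
  intro l hl S
  rcases eq_or_ne l p with rfl | hlp
  · have hPc : Nat.card P = l ^ (Nat.card G).factorization l := by
      rw [hG, factp hp hq hpq, hPcard]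
    haveI : Unique (Sylow l G) := Sylow.unique_of_normal (Sylow.ofCard P hPc) (by
      show ((Sylow.ofCard P hPc : Sylow l G) : Subgroup G).Normal
      rw [Sylow.coe_ofCard]; exact hPnorm)
    have : S = Sylow.ofCard P hPc := Subsingleton.elim _ _
    rw [this]
    show ((Sylow.ofCard P hPc : Sylow l G) : Subgroup G).Normal
    rw [Sylow.coe_ofCard]; exact hPnorm
  rcases eq_or_ne l q with rfl | hlq
  · have hQc : Nat.card Q = l ^ (Nat.card G).factorization l := by
      rw [hG, factq hp hq hpq, pow_one, hQcard]
    haveI : Unique (Sylow l G) := Sylow.unique_of_normal (Sylow.ofCard Q hQc) (by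
      show ((Sylow.ofCard Q hQc : Sylow l G) : Subgroup G).Normal
      rw [Sylow.coe_ofCard]; exact hQnorm)
    have : S = Sylow.ofCard Q hQc := Subsingleton.elim _ _
    rw [this]
    show ((Sylow.ofCard Q hQc : Sylow l G) : Subgroup G).Normal
    rw [Sylow.coe_ofCard]; exact hQnorm
  · have h0 : (Nat.card G).factorization l = 0 := by
      rw [hG]
      refine Nat.factorization_eq_zero_of_not_dvd ?_
      intro hdvd
      rcases (Nat.Prime.dvd_mul hl.out).mp hdvd with h | h
      · exact hlp ((Nat.prime_dvd_prime_iff_eq hl.out hp).mp (hl.out.dvd_of_dvd_pow h))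
      · exact hlq ((Nat.prime_dvd_prime_iff_eq hl.out hq).mp h)
    have : Nat.card S = 1 := by
      rw [Sylow.card_eq_multiplicity, h0, pow_zero]
    have hbot : (S : Subgroup G) = ⊥ := Subgroup.card_eq_one.mp this
    rw [hbot]
    infer_instance

lemma centQ_bot (hp : p.Prime) (hq : q.Prime) (hpq : p ≠ q)
    (hG : Nat.card G = p ^ r * q) (hPnorm : P.Normal) (hPcard : Nat.card P = p ^ r)
    (hPab : ∀ a b : P, a * b = b * a) (hQcard : Nat.card Q = q)
    (hsup : P ⊔ Q = ⊤)
    (hmin : ∀ N : Subgroup G, N.Normal → N ≤ P → N = ⊥ ∨ N = P)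
    (hnotnil : ¬ Group.IsNilpotent G) :
    P ⊓ Subgroup.centralizer (Q : Set G) = ⊥ := by
  set C := P ⊓ Subgroup.centralizer (Q : Set G) with hC
  have hPcent : P ≤ Subgroup.centralizer (C : Set G) := by
    intro x hx
    rw [Subgroup.mem_centralizer_iff]
    intro c hc
    have hcP : c ∈ P := (Subgroup.mem_inf.mp hc).1
    have := hPab ⟨c, hcP⟩ ⟨x, hx⟩
    exact congrArg Subtype.val this
  have hQcent : Q ≤ Subgroup.centralizer (C : Set G) := by
    intro y hy
    rw [Subgroup.mem_centralizer_iff]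
    intro c hc
    exact ((Subgroup.mem_inf.mp hc).2 y hy).symm
  have hcent : Subgroup.centralizer (C : Set G) = ⊤ :=
    top_le_iff.mp (hsup ▸ sup_le hPcent hQcent)
  have hCnorm : C.Normal := by
    constructor
    intro n hn g
    have hg : g ∈ Subgroup.centralizer (C : Set G) := hcent ▸ Subgroup.mem_top g
    have := Subgroup.mem_centralizer_iff.mp hg n hn
    rw [← this, mul_assoc, mul_inv_cancel, mul_one]
    exact hn
  rcases hmin C hCnorm inf_le_left with hbot | hPeq
  · exact hbot
  · exfalso
    apply hnotnil
    have hPle : P ≤ Subgroup.centralizer (Q : Set G) := by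
      rw [← hPeq]; exact inf_le_right
    have hQnorm : Q.Normal := by
      rw [← Subgroup.normalizer_eq_top_iff]
      refine top_le_iff.mp (hsup ▸ sup_le ?_ Subgroup.le_normalizer)
      refine le_trans hPle ?_
      intro x hx
      rw [Subgroup.mem_normalizer_iff]
      intro h
      constructor
      · intro hh
        have := Subgroup.mem_centralizer_iff.mp hx h hh
        rw [← this, mul_assoc, mul_inv_cancel, mul_one]
        exact hh
      · intro hh
        have := Subgroup.mem_centralizer_iff.mp hx _ hh
        have hx2 : h = x⁻¹ * (x * h * x⁻¹) * x := by group
        rw [hx2]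
        have h3 : x⁻¹ * (x * h * x⁻¹) * x = x * h * x⁻¹ := by
          rw [mul_assoc, this]; group
        rw [h3]
        exact hh
    exact nilpotent_of_Qnormal hp hq hpq hG hPnorm hPcard hQcard hQnorm

lemma fpf (hp : p.Prime) (hq : q.Prime) (hpq : p ≠ q)
    (hG : Nat.card G = p ^ r * q) (hPnorm : P.Normal) (hPcard : Nat.card P = p ^ r)
    (hPab : ∀ a b : P, a * b = b * a) (hQcard : Nat.card Q = q)
    (hsup : P ⊔ Q = ⊤)
    (hmin : ∀ N : Subgroup G, N.Normal → N ≤ P → N = ⊥ ∨ N = P)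
    (hnotnil : ¬ Group.IsNilpotent G)
    {K : Subgroup G} (hK : Nat.card K = q) {x : G} (hx : x ∈ P)
    (hc : ∀ y ∈ K, y * x = x * y) : x = 1 := by
  obtain ⟨g, hg⟩ := q_conj hp hq hpq hG hQcard hK
  have hz : g⁻¹ * x * g ∈ P := by
    have := hPnorm.conj_mem x hx g⁻¹
    simpa using this
  have hzc : g⁻¹ * x * g ∈ Subgroup.centralizer (Q : Set G) := by
    rw [Subgroup.mem_centralizer_iff]
    intro y hy
    have hyK : g * y * g⁻¹ ∈ K := by
      rw [← hg]
      have := Subgroup.smul_mem_pointwise_smul y (MulAut.conj g) Q hy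
      simpa using this
    have key := hc _ hyK
    have := congrArg (fun t => g⁻¹ * t * g) key
    simp only [mul_assoc] at this ⊢
    simpa [mul_assoc] using this
  have : g⁻¹ * x * g ∈ P ⊓ Subgroup.centralizer (Q : Set G) :=
    Subgroup.mem_inf.mpr ⟨hz, hzc⟩
  rw [centQ_bot hp hq hpq hG hPnorm hPcard hPab hQcard hsup hmin hnotnil] at this
  have h1 : g⁻¹ * x * g = 1 := Subgroup.mem_bot.mp this
  have := congrArg (fun t => g * t * g⁻¹) h1
  simpa [mul_assoc] using this

lemma normalizer_Q (hp : p.Prime) (hq : q.Prime) (hpq : p ≠ q)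
    (hG : Nat.card G = p ^ r * q) (hPnorm : P.Normal) (hPcard : Nat.card P = p ^ r)
    (hPab : ∀ a b : P, a * b = b * a) (hQcard : Nat.card Q = q)
    (hsup : P ⊔ Q = ⊤) (hinf : P ⊓ Q = ⊥)
    (hmin : ∀ N : Subgroup G, N.Normal → N ≤ P → N = ⊥ ∨ N = P)
    (hnotnil : ¬ Group.IsNilpotent G) : (Subgroup.normalizer (Q : Set G)) = Q := by
  have hPN : Disjoint P (Subgroup.normalizer (Q : Set G)) := by
    rw [disjoint_iff_inf_le]
    intro x hx
    rw [Subgroup.mem_inf] at hx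
    obtain ⟨hxP, hxN⟩ := hx
    have hx1 : x = 1 := by
      refine fpf hp hq hpq hG hPnorm hPcard hPab hQcard hsup hmin hnotnil hQcard hxP ?_
      intro y hy
      have hd1 : x * y * x⁻¹ ∈ Q := (Subgroup.mem_normalizer_iff.mp hxN y).mp hy
      have hdQ : x * y * x⁻¹ * y⁻¹ ∈ Q := Q.mul_mem hd1 (Q.inv_mem hy)
      have hdP : x * y * x⁻¹ * y⁻¹ ∈ P := by
        have h2 : y * x⁻¹ * y⁻¹ ∈ P := hPnorm.conj_mem x⁻¹ (P.inv_mem hxP) y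
        have : x * (y * x⁻¹ * y⁻¹) ∈ P := P.mul_mem hxP h2
        simpa [mul_assoc] using this
      have : x * y * x⁻¹ * y⁻¹ ∈ P ⊓ Q := Subgroup.mem_inf.mpr ⟨hdP, hdQ⟩
      rw [hinf, Subgroup.mem_bot] at this
      have h4 : x * y = y * x := by
        have := congrArg (fun t => t * y * x) this
        simpa [mul_assoc] using this
      exact h4.symm
    simp [hx1]
  haveI : P.Normal := hPnorm
  have hdvd : Nat.card (Subgroup.normalizer (Q : Set G)) ∣ q := by
    have h1 : P.relIndex (Subgroup.normalizer (Q : Set G)) ∣ P.index := Subgroup.relIndex_dvd_index_of_normal P (Subgroup.normalizer (Q : Set G))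
    rw [Pindex hinf hsup hPnorm hQcard] at h1
    rwa [Subgroup.relIndex, Subgroup.subgroupOf_eq_bot.mpr hPN, Subgroup.index_bot] at h1
  have hle : Nat.card (Subgroup.normalizer (Q : Set G)) ≤ Nat.card Q := by
    rw [hQcard]
    exact Nat.le_of_dvd hq.pos hdvd
  exact (Subgroup.eq_of_le_of_card_ge Subgroup.le_normalizer hle).symm

lemma card_sylow_q (hp : p.Prime) (hq : q.Prime) (hpq : p ≠ q)
    (hG : Nat.card G = p ^ r * q) (hPnorm : P.Normal) (hPcard : Nat.card P = p ^ r)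
    (hPab : ∀ a b : P, a * b = b * a) (hQcard : Nat.card Q = q)
    (hsup : P ⊔ Q = ⊤) (hinf : P ⊓ Q = ⊥)
    (hmin : ∀ N : Subgroup G, N.Normal → N ≤ P → N = ⊥ ∨ N = P)
    (hnotnil : ¬ Group.IsNilpotent G) : Nat.card (Sylow q G) = p ^ r := by
  haveI : Fact q.Prime := ⟨hq⟩
  have hQc : Nat.card Q = q ^ (Nat.card G).factorization q := by
    rw [hG, factq hp hq hpq, pow_one, hQcard]
  have h1 := Sylow.card_eq_index_normalizer (Sylow.ofCard Q hQc)
  change Nat.card (Sylow q G) = (Subgroup.normalizer (Q : Set G)).index at h1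
  rw [h1, normalizer_Q hp hq hpq hG hPnorm hPcard hPab hQcard hsup hinf hmin hnotnil]
  have h2 : Nat.card Q * Q.index = Nat.card G := Subgroup.card_mul_index Q
  rw [hQcard, hG, mul_comm (p ^ r) q] at h2
  exact Nat.eq_of_mul_eq_mul_left hq.pos h2

lemma q_lt_pr (hp : p.Prime) (hq : q.Prime) (hpq : p ≠ q) (hr : 1 ≤ r)
    (hG : Nat.card G = p ^ r * q) (hPnorm : P.Normal) (hPcard : Nat.card P = p ^ r)
    (hPab : ∀ a b : P, a * b = b * a) (hQcard : Nat.card Q = q)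
    (hsup : P ⊔ Q = ⊤) (hinf : P ⊓ Q = ⊥)
    (hmin : ∀ N : Subgroup G, N.Normal → N ≤ P → N = ⊥ ∨ N = P)
    (hnotnil : ¬ Group.IsNilpotent G) : q < p ^ r := by
  haveI : Fact q.Prime := ⟨hq⟩
  have h1 : p ^ r ≡ 1 [MOD q] := by
    rw [← card_sylow_q hp hq hpq hG hPnorm hPcard hPab hQcard hsup hinf hmin hnotnil]
    exact card_sylow_modEq_one q G
  have hpr1 : 1 < p ^ r := Nat.one_lt_pow (by omega) hp.one_lt
  have h2 : q ∣ p ^ r - 1 := (Nat.modEq_iff_dvd' (le_of_lt hpr1)).mp h1.symm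
  have h3 : q ≤ p ^ r - 1 := Nat.le_of_dvd (by omega) h2
  omega

lemma cardH_fact_q (hp : p.Prime) (hq : q.Prime) (hpq : p ≠ q)
    {H : Subgroup G} (hdvd : Nat.card H ∣ p ^ r * q) (hqd : q ∣ Nat.card H) :
    (Nat.card H).factorization q = 1 := by
  have hne : Nat.card H ≠ 0 := Nat.card_pos.ne'
  have hpos : 0 < (Nat.card H).factorization q := hq.factorization_pos_of_dvd hne hqd
  by_contra hne1
  have h2 : 2 ≤ (Nat.card H).factorization q := by omega
  have : q ^ 2 ∣ Nat.card H := by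
    calc q ^ 2 ∣ q ^ (Nat.card H).factorization q := pow_dvd_pow q h2
    _ ∣ Nat.card H := Nat.ordProj_dvd _ q
  have hq2 : q ^ 2 ∣ p ^ r * q := this.trans hdvd
  have : q ∣ p ^ r := by
    rcases hq2 with ⟨c, hc⟩
    refine ⟨c, ?_⟩
    have := Nat.eq_of_mul_eq_mul_right hq.pos (by linarith [hc] : p ^ r * q = q * c * q)
    linarith [this]
  exact hpq (((Nat.prime_dvd_prime_iff_eq hq hp).mp (hq.dvd_of_dvd_pow this))).symm

lemma classify (hp : p.Prime) (hq : q.Prime) (hpq : p ≠ q)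
    (hG : Nat.card G = p ^ r * q) (hPnorm : P.Normal) (hPcard : Nat.card P = p ^ r)
    (hPab : ∀ a b : P, a * b = b * a) (hQcard : Nat.card Q = q)
    (hsup : P ⊔ Q = ⊤) (hinf : P ⊓ Q = ⊥)
    (hmin : ∀ N : Subgroup G, N.Normal → N ≤ P → N = ⊥ ∨ N = P)
    (hnotnil : ¬ Group.IsNilpotent G)
    (hschmidt : ∀ H : Subgroup G, H ≠ ⊤ → Group.IsNilpotent H)
    (H : Subgroup G) : H ≤ P ∨ Nat.card H = q ∨ H = ⊤ := by
  haveI : Fact p.Prime := ⟨hp⟩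
  haveI : Fact q.Prime := ⟨hq⟩
  have hdvd : Nat.card H ∣ p ^ r * q := hG ▸ Subgroup.card_subgroup_dvd_card H
  by_cases hqd : q ∣ Nat.card H
  · by_cases htop : H = ⊤
    · exact Or.inr (Or.inr htop)
    refine Or.inr (Or.inl ?_)
    have hnil : Group.IsNilpotent H := hschmidt H htop
    have hsyl := ((isNilpotent_of_finite_tfae (G := ↥H)).out 0 3).mp hnil
    obtain ⟨S⟩ : Nonempty (Sylow q ↥H) := inferInstance
    obtain ⟨T⟩ : Nonempty (Sylow p ↥H) := inferInstance
    have hSnorm : (S : Subgroup ↥H).Normal := hsyl q ⟨hq⟩ S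
    have hTnorm : (T : Subgroup ↥H).Normal := hsyl p ⟨hp⟩ T
    have hScard : Nat.card (S : Subgroup ↥H) = q := by
      rw [Sylow.card_eq_multiplicity, cardH_fact_q hp hq hpq hdvd hqd, pow_one]
    -- disjointness of T and S
    have hdisj : Disjoint (T : Subgroup ↥H) (S : Subgroup ↥H) := by
      rw [disjoint_iff]
      have h1 : Nat.card ((T : Subgroup ↥H) ⊓ (S : Subgroup ↥H) : Subgroup ↥H) ∣ p ^ (Nat.card ↥H).factorization p := by
        have := Subgroup.card_dvd_of_le (inf_le_left (a := (T : Subgroup ↥H)) (b := (S : Subgroup ↥H)))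
        rwa [Sylow.card_eq_multiplicity T] at this
      have h2 : Nat.card ((T : Subgroup ↥H) ⊓ (S : Subgroup ↥H) : Subgroup ↥H) ∣ q := by
        have := Subgroup.card_dvd_of_le (inf_le_right (a := (T : Subgroup ↥H)) (b := (S : Subgroup ↥H)))
        rwa [hScard] at this
      have hcop : Nat.Coprime (p ^ (Nat.card ↥H).factorization p) q :=
        Nat.Coprime.pow_left _ ((Nat.coprime_primes hp hq).mpr hpq)
      have := Nat.eq_one_of_dvd_coprimes hcop h1 h2
      exact Subgroup.card_eq_one.mp this
    have hcomm := Subgroup.commute_of_normal_of_disjoint _ _ hTnorm hSnorm hdisj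
    -- image subgroups in G
    set Sg := (S : Subgroup ↥H).map H.subtype with hSg
    set Tg := (T : Subgroup ↥H).map H.subtype with hTg
    have hSgcard : Nat.card Sg = q := by
      rw [← hScard]
      exact (Nat.card_congr ((S : Subgroup ↥H).equivMapOfInjective H.subtype
        H.subtype_injective).toEquiv).symm
    have hTgP : Tg ≤ P := by
      refine pgroup_le hp hq hpq hG hPnorm hPcard ?_
      exact T.isPGroup'.map H.subtype
    have hTbot : Tg = ⊥ := by
      rw [eq_bot_iff]
      intro x hx
      rw [Subgroup.mem_bot]
      refine fpf hp hq hpq hG hPnorm hPcard hPab hQcard hsup hmin hnotnil hSgcard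
        (hTgP hx) ?_
      intro y hy
      obtain ⟨t, ht, rfl⟩ := hx
      obtain ⟨s, hs, rfl⟩ := hy
      have := hcomm t s ht hs
      exact congrArg Subtype.val this.symm
    have hTbot' : (T : Subgroup ↥H) = ⊥ :=
      (Subgroup.map_eq_bot_iff_of_injective (T : Subgroup ↥H) H.subtype_injective).mp hTbot
    have hTcard : Nat.card (T : Subgroup ↥H) = 1 := by rw [hTbot']; simp
    have hfp0 : (Nat.card ↥H).factorization p = 0 := by
      have := Sylow.card_eq_multiplicity T
      rw [hTcard] at this
      by_contra hne
      have : p ∣ 1 := by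
        rw [this]
        exact dvd_pow_self p (by omega)
      exact hp.one_lt.ne' (Nat.eq_one_of_dvd_one this ▸ rfl)
    have hpnd : ¬ p ∣ Nat.card H := by
      intro hcon
      have := hp.factorization_pos_of_dvd Nat.card_pos.ne' hcon
      omega
    have hcop : Nat.Coprime (Nat.card H) (p ^ r) :=
      Nat.Coprime.pow_right _ ((hp.coprime_iff_not_dvd.mpr hpnd).symm)
    have hHq : Nat.card H ∣ q := hcop.dvd_of_dvd_mul_left hdvd
    exact Nat.dvd_antisymm hHq hqd
  · left
    have hcop : Nat.Coprime (Nat.card H) q := (hq.coprime_iff_not_dvd.mpr hqd).symm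
    have hHp : Nat.card H ∣ p ^ r := hcop.dvd_of_dvd_mul_right hdvd
    obtain ⟨k, _, hk⟩ := (Nat.dvd_prime_pow hp).mp hHp
    exact pgroup_le hp hq hpq hG hPnorm hPcard (IsPGroup.of_card hk)

section perm

lemma mul_eq_sup' {H K : Subgroup G} (h : (H : Set G) * (K : Set G) = (K : Set G) * (H : Set G)) :
    ((H ⊔ K : Subgroup G) : Set G) = (H : Set G) * (K : Set G) := by
  have hsub : ∀ z ∈ (H : Set G) * (K : Set G), z ∈ (H ⊔ K : Subgroup G) := by
    rintro z ⟨x, hx, y, hy, rfl⟩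
    exact Subgroup.mul_mem _ (Subgroup.mem_sup_left hx) (Subgroup.mem_sup_right hy)
  let M : Subgroup G :=
    { carrier := (H : Set G) * (K : Set G)
      one_mem' := ⟨1, H.one_mem, 1, K.one_mem, one_mul 1⟩
      mul_mem' := by
        rintro a b ⟨x1, hx1, y1, hy1, rfl⟩ ⟨x2, hx2, y2, hy2, rfl⟩
        have : y1 * x2 ∈ (K : Set G) * (H : Set G) := ⟨y1, hy1, x2, hx2, rfl⟩
        rw [← h] at this
        obtain ⟨x3, hx3, y3, hy3, hxy⟩ := this
        refine ⟨x1 * x3, H.mul_mem hx1 hx3, y3 * y2, K.mul_mem hy3 hy2, ?_⟩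
        calc x1 * x3 * (y3 * y2) = x1 * (x3 * y3) * y2 := by group
        _ = x1 * (y1 * x2) * y2 := by rw [show x3 * y3 = y1 * x2 from hxy]
        _ = x1 * y1 * (x2 * y2) := by group
      inv_mem' := by
        rintro a ⟨x, hx, y, hy, rfl⟩
        have : (x * y)⁻¹ ∈ (K : Set G) * (H : Set G) :=
          ⟨y⁻¹, K.inv_mem hy, x⁻¹, H.inv_mem hx, by group⟩
        rw [← h] at this
        exact this }
  have hHM : H ≤ M := fun x hx => ⟨x, hx, 1, K.one_mem, mul_one x⟩
  have hKM : K ≤ M := fun y hy => ⟨1, H.one_mem, y, hy, one_mul y⟩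
  have h1 : H ⊔ K ≤ M := sup_le hHM hKM
  have h2 : (M : Set G) ⊆ ((H ⊔ K : Subgroup G) : Set G) := hsub
  exact le_antisymm (fun z hz => h1 hz) h2

lemma card_sup_le {H K : Subgroup G} (h : (H : Set G) * (K : Set G) = (K : Set G) * (H : Set G)) :
    Nat.card (H ⊔ K : Subgroup G) ≤ Nat.card H * Nat.card K := by
  have hs := mul_eq_sup' h
  have : Function.Surjective (fun ab : H × K => (⟨ab.1 * ab.2,
      by exact Subgroup.mul_mem _ (Subgroup.mem_sup_left ab.1.2) (Subgroup.mem_sup_right ab.2.2)⟩ :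
      (H ⊔ K : Subgroup G))) := by
    rintro ⟨z, hz⟩
    have : z ∈ (H : Set G) * (K : Set G) := by rw [← hs]; exact hz
    obtain ⟨x, hx, y, hy, hxy⟩ := this
    exact ⟨(⟨x, hx⟩, ⟨y, hy⟩), Subtype.ext hxy⟩
  calc Nat.card (H ⊔ K : Subgroup G) ≤ Nat.card (H × K) := Nat.card_le_card_of_surjective _ this
  _ = Nat.card H * Nat.card K := Nat.card_prod _ _

lemma perm_of_commute {H K : Subgroup G} (h : ∀ x ∈ H, ∀ y ∈ K, x * y = y * x) :
    (H : Set G) * (K : Set G) = (K : Set G) * (H : Set G) := by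
  ext z
  constructor
  · rintro ⟨x, hx, y, hy, rfl⟩
    exact ⟨y, hy, x, hx, (h x hx y hy).symm⟩
  · rintro ⟨y, hy, x, hx, rfl⟩
    exact ⟨x, hx, y, hy, (h x hx y hy)⟩

lemma perm_of_normal_left {H K : Subgroup G} (hH : H.Normal) :
    (H : Set G) * (K : Set G) = (K : Set G) * (H : Set G) := by
  haveI := hH
  exact (Subgroup.set_mul_normal_comm (K : Set G) H).symm

end perm

lemma not_perm_sylows (hp : p.Prime) (hq : q.Prime) (hpq : p ≠ q) (hr : 1 ≤ r)
    (hG : Nat.card G = p ^ r * q) (hPnorm : P.Normal) (hPcard : Nat.card P = p ^ r)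
    (hPab : ∀ a b : P, a * b = b * a) (hQcard : Nat.card Q = q)
    (hsup : P ⊔ Q = ⊤) (hinf : P ⊓ Q = ⊥)
    (hmin : ∀ N : Subgroup G, N.Normal → N ≤ P → N = ⊥ ∨ N = P)
    (hnotnil : ¬ Group.IsNilpotent G)
    (hschmidt : ∀ H : Subgroup G, H ≠ ⊤ → Group.IsNilpotent H)
    {H K : Subgroup G} (hH : Nat.card H = q) (hK : Nat.card K = q) (hne : H ≠ K)
    (hperm : (H : Set G) * (K : Set G) = (K : Set G) * (H : Set G)) : False := by
  have hqlt := q_lt_pr hp hq hpq hr hG hPnorm hPcard hPab hQcard hsup hinf hmin hnotnil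
  rcases classify hp hq hpq hG hPnorm hPcard hPab hQcard hsup hinf hmin hnotnil hschmidt
    (H ⊔ K) with hle | hcard | htop
  · have : Nat.card H ∣ p ^ r := by
      rw [← hPcard]
      exact Subgroup.card_dvd_of_le (le_trans le_sup_left hle)
    rw [hH] at this
    exact hpq (((Nat.prime_dvd_prime_iff_eq hq hp).mp (hq.dvd_of_dvd_pow this))).symm
  · have h1 : H = H ⊔ K := Subgroup.eq_of_le_of_card_ge le_sup_left (by rw [hcard, hH])
    have h2 : K = H ⊔ K := Subgroup.eq_of_le_of_card_ge le_sup_right (by rw [hcard, hK])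
    exact hne (h1.trans h2.symm)
  · have hcard := card_sup_le hperm
    rw [htop, hH, hK] at hcard
    rw [Subgroup.card_top, hG] at hcard
    have : p ^ r * q ≤ q * q := hcard
    have hqpos := hq.pos
    nlinarith

lemma not_perm_mid (hp : p.Prime) (hq : q.Prime) (hpq : p ≠ q) (hr : 1 ≤ r)
    (hG : Nat.card G = p ^ r * q) (hPnorm : P.Normal) (hPcard : Nat.card P = p ^ r)
    (hPab : ∀ a b : P, a * b = b * a) (hQcard : Nat.card Q = q)
    (hsup : P ⊔ Q = ⊤) (hinf : P ⊓ Q = ⊥)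
    (hmin : ∀ N : Subgroup G, N.Normal → N ≤ P → N = ⊥ ∨ N = P)
    (hnotnil : ¬ Group.IsNilpotent G)
    (hschmidt : ∀ H : Subgroup G, H ≠ ⊤ → Group.IsNilpotent H)
    {H K : Subgroup G} (hHP : H ≤ P) (hHbot : H ≠ ⊥) (hHne : H ≠ P) (hK : Nat.card K = q)
    (hperm : (H : Set G) * (K : Set G) = (K : Set G) * (H : Set G)) : False := by
  have hHdvd : Nat.card H ∣ p ^ r := by
    rw [← hPcard]; exact Subgroup.card_dvd_of_le hHP
  obtain ⟨k, hkr, hk⟩ := (Nat.dvd_prime_pow hp).mp hHdvd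
  have hk1 : 1 ≤ k := by
    rcases Nat.eq_zero_or_pos k with h0 | h1
    · exfalso
      apply hHbot
      apply Subgroup.card_eq_one.mp
      rw [hk, h0, pow_zero]
    · exact h1
  have hkltr : k < r := by
    rcases lt_or_eq_of_le hkr with h | h
    · exact h
    · exfalso
      apply hHne
      refine Subgroup.eq_of_le_of_card_ge hHP ?_
      rw [hPcard, hk, h]
  rcases classify hp hq hpq hG hPnorm hPcard hPab hQcard hsup hinf hmin hnotnil hschmidt
    (H ⊔ K) with hle | hcard | htop
  · have : Nat.card K ∣ p ^ r := by
      rw [← hPcard]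
      exact Subgroup.card_dvd_of_le (le_trans le_sup_right hle)
    rw [hK] at this
    exact hpq (((Nat.prime_dvd_prime_iff_eq hq hp).mp (hq.dvd_of_dvd_pow this))).symm
  · have h2 : K = H ⊔ K := Subgroup.eq_of_le_of_card_ge le_sup_right (by rw [hcard, hK])
    have h3 : Nat.card H ∣ q := by
      rw [← hK]
      exact Subgroup.card_dvd_of_le (h2 ▸ le_sup_left)
    rw [hk] at h3
    have hpdq : p ∣ q := dvd_trans (dvd_pow_self p (by omega : k ≠ 0)) h3
    exact hpq ((Nat.prime_dvd_prime_iff_eq hp hq).mp hpdq)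
  · have hcard := card_sup_le hperm
    rw [htop, hk, hK] at hcard
    rw [Subgroup.card_top, hG] at hcard
    have hlt : p ^ k * q < p ^ r * q := by
      have : p ^ k < p ^ r := Nat.pow_lt_pow_right hp.one_lt hkltr
      exact Nat.mul_lt_mul_of_lt_of_le this (le_refl q) hq.pos
    omega

section count

lemma ncard_prod' {α β : Type*} (A : Set α) (B : Set β) :
    (A ×ˢ B).ncard = A.ncard * B.ncard := by
  rw [← Nat.card_coe_set_eq, ← Nat.card_coe_set_eq, ← Nat.card_coe_set_eq,
    Nat.card_congr (Equiv.Set.prod A B), Nat.card_prod]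

lemma disj_prod_left {α β : Type*} {A C : Set α} {B D : Set β} (h : Disjoint A C) :
    Disjoint (A ×ˢ B) (C ×ˢ D) := by
  rw [Set.disjoint_left] at h ⊢
  rintro ⟨x, y⟩ ⟨hx, _⟩ ⟨hx', _⟩
  exact h hx hx'

lemma disj_prod_right {α β : Type*} {A C : Set α} {B D : Set β} (h : Disjoint B D) :
    Disjoint (A ×ˢ B) (C ×ˢ D) := by
  rw [Set.disjoint_left] at h ⊢
  rintro ⟨x, y⟩ ⟨_, hy⟩ ⟨_, hy'⟩
  exact h hy hy'

end count


/-- The subgroup commutativity degree of such a Schmidt group is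
`(a² + 2a + 7pʳ + 1) / (a + pʳ + 1)²` with `a` the number of subgroups of the
Sylow `p`-subgroup. -/
theorem schmidt_sd (hp : p.Prime) (hq : q.Prime) (hpq : p ≠ q) (hr : 1 ≤ r)
    (hPnorm : P.Normal) (hPcard : Nat.card P = p ^ r)
    (hPab : ∀ a b : P, a * b = b * a) (hPelem : ∀ a : P, a ^ p = 1)
    (hQcard : Nat.card Q = q)
    (hsup : P ⊔ Q = ⊤) (hinf : P ⊓ Q = ⊥)
    (hmin : ∀ N : Subgroup G, N.Normal → N ≤ P → N = ⊥ ∨ N = P)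
    (hnotnil : ¬ Group.IsNilpotent G)
    (hschmidt : ∀ H : Subgroup G, H ≠ ⊤ → Group.IsNilpotent H) :
    sd G = ((Nat.card (Subgroup P) : ℚ) ^ 2 + 2 * (Nat.card (Subgroup P) : ℚ)
        + 7 * (p : ℚ) ^ r + 1) / ((Nat.card (Subgroup P) : ℚ) + (p : ℚ) ^ r + 1) ^ 2 := by
  have hG : Nat.card G = p ^ r * q := cardG hinf hsup hPnorm hPcard hQcard
  haveI : Fact p.Prime := ⟨hp⟩
  haveI : Fact q.Prime := ⟨hq⟩
  set a := Nat.card (Subgroup P) with ha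
  have hpr1 : 1 < p ^ r := Nat.one_lt_pow (by omega) hp.one_lt
  have hPtop : P ≠ ⊤ := by
    intro h
    rw [h, Subgroup.card_top, hG] at hPcard
    nlinarith [hq.two_le, pow_pos hp.pos r]
  have hbotP : (⊥ : Subgroup G) ≠ P := by
    intro h
    rw [← h, Subgroup.card_bot] at hPcard
    omega
  set S1 : Set (Subgroup G) := {H | H ≤ P} with hS1def
  set S2 : Set (Subgroup G) := {H | Nat.card H = q} with hS2def
  set S3 : Set (Subgroup G) := {(⊤ : Subgroup G)} with hS3def
  have d12 : Disjoint S1 S2 := by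
    rw [Set.disjoint_left]
    intro H h1 h2
    have hd : Nat.card H ∣ p ^ r := by rw [← hPcard]; exact Subgroup.card_dvd_of_le h1
    rw [show Nat.card H = q from h2] at hd
    exact hpq (((Nat.prime_dvd_prime_iff_eq hq hp).mp (hq.dvd_of_dvd_pow hd))).symm
  have d13 : Disjoint S1 S3 := by
    rw [Set.disjoint_left]
    intro H h1 h3
    rw [hS3def, Set.mem_singleton_iff] at h3
    subst h3
    exact hPtop (top_le_iff.mp h1)
  have d23 : Disjoint S2 S3 := by
    rw [Set.disjoint_left]
    intro H h2 h3
    rw [hS3def, Set.mem_singleton_iff] at h3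
    subst h3
    rw [hS2def, Set.mem_setOf_eq, Subgroup.card_top, hG] at h2
    nlinarith [hq.two_le, pow_pos hp.pos r]
  have hcard1 : S1.ncard = a := by
    rw [← Nat.card_coe_set_eq]
    refine Nat.card_congr ?_
    exact
      { toFun := fun H => Subgroup.subgroupOf H.1 P
        invFun := fun K => ⟨K.map P.subtype, Subgroup.map_subtype_le K⟩
        left_inv := by
          rintro ⟨H, hH⟩
          apply Subtype.ext
          simp only
          rw [Subgroup.subgroupOf_map_subtype]
          exact inf_eq_left.mpr hH
        right_inv := fun K =>
          Subgroup.comap_map_eq_self_of_injective P.subtype_injective K }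
  have hfq : (Nat.card G).factorization q = 1 := by rw [hG]; exact factq hp hq hpq
  have hcard2 : S2.ncard = p ^ r := by
    rw [← Nat.card_coe_set_eq]
    have key : ∀ H : Subgroup G, H ∈ S2 → Nat.card H = q ^ (Nat.card G).factorization q := by
      intro H hH
      rw [hfq, pow_one]
      exact hH
    have e2 : ↥S2 ≃ Sylow q G :=
      { toFun := fun H => (Sylow.ofCard H.1 (key H.1 H.2) : Sylow q G)
        invFun := fun S => ⟨S.1, by
          show Nat.card (S : Subgroup G) = q
          have := Sylow.card_eq_multiplicity S
          rwa [hfq, pow_one] at this⟩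
        left_inv := fun H => Subtype.ext (Sylow.coe_ofCard H.1 (key H.1 H.2))
        right_inv := fun S => Sylow.ext (Sylow.coe_ofCard (S : Subgroup G) _) }
    rw [Nat.card_congr e2]
    exact card_sylow_q hp hq hpq hG hPnorm hPcard hPab hQcard hsup hinf hmin hnotnil
  have hcard3 : S3.ncard = 1 := Set.ncard_singleton _
  have hclass := classify hp hq hpq hG hPnorm hPcard hPab hQcard hsup hinf hmin hnotnil hschmidt
  have hcover : (Set.univ : Set (Subgroup G)) = S1 ∪ S2 ∪ S3 := by
    apply Set.ext
    intro H
    constructor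
    · intro _
      rcases hclass H with h | h | h
      · exact Or.inl (Or.inl h)
      · exact Or.inl (Or.inr h)
      · exact Or.inr (by rw [hS3def]; simpa)
    · intro _
      trivial
  have d123 : Disjoint (S1 ∪ S2) S3 := Set.disjoint_union_left.mpr ⟨d13, d23⟩
  have hden : Nat.card (Subgroup G) = a + p ^ r + 1 := by
    rw [← Set.ncard_univ, hcover,
      Set.ncard_union_eq d123 (Set.toFinite _) (Set.toFinite _),
      Set.ncard_union_eq d12 (Set.toFinite _) (Set.toFinite _), hcard1, hcard2, hcard3]
  -- pair counting
  set Perm : Set (Subgroup G × Subgroup G) :=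
    {pr | (pr.1 : Set G) * (pr.2 : Set G) = (pr.2 : Set G) * (pr.1 : Set G)} with hPermdef
  set BP : Set (Subgroup G) := {⊥, P} with hBPdef
  have hBPsub : BP ⊆ S1 := by
    intro H hH
    simp only [hBPdef, Set.mem_insert_iff, Set.mem_singleton_iff] at hH
    simp only [hS1def, Set.mem_setOf_eq]
    rcases hH with rfl | rfl
    · exact bot_le
    · exact le_rfl
  set C12 : Set (Subgroup G) := S1 ∪ S2 with hC12def
  set C1 := S1 ×ˢ S1 with hC1def
  set C2 := BP ×ˢ S2 with hC2def
  set C3 := S2 ×ˢ BP with hC3def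
  set C4 := (fun H : Subgroup G => (H, H)) '' S2 with hC4def
  set C5 := S3 ×ˢ C12 with hC5def
  set C6 := C12 ×ˢ S3 with hC6def
  set C7 := S3 ×ˢ S3 with hC7def
  have hC4sub : C4 ⊆ S2 ×ˢ S2 := by
    rintro pr ⟨H, hH, rfl⟩
    exact ⟨hH, hH⟩
  have hPcomm : ∀ x ∈ P, ∀ y ∈ P, x * y = y * x := fun x hx y hy =>
    congrArg Subtype.val (hPab ⟨x, hx⟩ ⟨y, hy⟩)
  have hPerm : Perm = C1 ∪ C2 ∪ C3 ∪ C4 ∪ C5 ∪ C6 ∪ C7 := by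
    apply Set.ext
    rintro ⟨H, K⟩
    simp only [Set.mem_union]
    constructor
    · intro hmem
      have hmem' : (H : Set G) * (K : Set G) = (K : Set G) * (H : Set G) := hmem
      rcases hclass H with h1 | h2 | h3
      · rcases hclass K with k1 | k2 | k3
        · exact Or.inl (Or.inl (Or.inl (Or.inl (Or.inl (Or.inl ⟨h1, k1⟩)))))
        · -- H ≤ P, card K = q
          have hHbp : H = ⊥ ∨ H = P := by
            by_contra hcon
            push_neg at hcon
            exact not_perm_mid hp hq hpq hr hG hPnorm hPcard hPab hQcard hsup hinf hmin
              hnotnil hschmidt h1 hcon.1 hcon.2 k2 hmem'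
          refine Or.inl (Or.inl (Or.inl (Or.inl (Or.inl (Or.inr ⟨?_, k2⟩)))))
          rcases hHbp with rfl | rfl
          · exact Set.mem_insert _ _
          · exact Set.mem_insert_of_mem _ rfl
        · exact Or.inl (Or.inr ⟨Or.inl h1, k3⟩)
      · rcases hclass K with k1 | k2 | k3
        · have hKbp : K = ⊥ ∨ K = P := by
            by_contra hcon
            push_neg at hcon
            exact not_perm_mid hp hq hpq hr hG hPnorm hPcard hPab hQcard hsup hinf hmin
              hnotnil hschmidt k1 hcon.1 hcon.2 h2 hmem'.symm
          refine Or.inl (Or.inl (Or.inl (Or.inl (Or.inr ⟨h2, ?_⟩))))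
          rcases hKbp with rfl | rfl
          · exact Set.mem_insert _ _
          · exact Set.mem_insert_of_mem _ rfl
        · have hHK : H = K := by
            by_contra hcon
            exact not_perm_sylows hp hq hpq hr hG hPnorm hPcard hPab hQcard hsup hinf hmin
              hnotnil hschmidt h2 k2 hcon hmem'
          subst hHK
          exact Or.inl (Or.inl (Or.inl (Or.inr ⟨H, h2, rfl⟩)))
        · exact Or.inl (Or.inr ⟨Or.inr h2, k3⟩)
      · rcases hclass K with k1 | k2 | k3
        · exact Or.inl (Or.inl (Or.inr ⟨h3, Or.inl k1⟩))
        · exact Or.inl (Or.inl (Or.inr ⟨h3, Or.inr k2⟩))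
        · exact Or.inr ⟨h3, k3⟩
    · intro hmem
      rcases hmem with ((((((⟨m1, m2⟩ | ⟨m1, m2⟩) | ⟨m1, m2⟩) | hm) | ⟨m1, m2⟩) | ⟨m1, m2⟩) | ⟨m1, m2⟩)
      · exact perm_of_commute fun x hx y hy => hPcomm x (m1 hx) y (m2 hy)
      · show (H : Set G) * (K : Set G) = (K : Set G) * (H : Set G)
        rcases m1 with rfl | hb
        · exact perm_of_normal_left inferInstance
        · rw [Set.mem_singleton_iff] at hb
          subst hb
          exact perm_of_normal_left hPnorm
      · show (H : Set G) * (K : Set G) = (K : Set G) * (H : Set G)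
        rcases m2 with rfl | hb
        · exact (perm_of_normal_left inferInstance).symm
        · rw [Set.mem_singleton_iff] at hb
          subst hb
          exact (perm_of_normal_left hPnorm).symm
      · obtain ⟨M, hM, heq⟩ := hm
        rw [← heq]
        show (M : Set G) * (M : Set G) = (M : Set G) * (M : Set G)
        rfl
      · rw [hS3def, Set.mem_singleton_iff] at m1
        subst m1
        show ((⊤ : Subgroup G) : Set G) * (K : Set G) = (K : Set G) * ((⊤ : Subgroup G) : Set G)
        exact perm_of_normal_left inferInstance
      · rw [hS3def, Set.mem_singleton_iff] at m2
        subst m2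
        exact (perm_of_normal_left inferInstance).symm
      · rw [hS3def, Set.mem_singleton_iff] at m1
        subst m1
        exact perm_of_normal_left inferInstance
  -- disjointness
  have dBP2 : Disjoint BP S2 := d12.mono_left hBPsub
  have dBP3 : Disjoint BP S3 := d13.mono_left hBPsub
  have d3 : Disjoint C12 S3 := d123
  have D2 : Disjoint C1 C2 := disj_prod_right d12
  have D3 : Disjoint (C1 ∪ C2) C3 :=
    Set.disjoint_union_left.mpr ⟨disj_prod_left d12, disj_prod_left dBP2⟩
  have D4 : Disjoint (C1 ∪ C2 ∪ C3) C4 := by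
    refine Disjoint.mono_right hC4sub ?_
    refine Set.disjoint_union_left.mpr ⟨Set.disjoint_union_left.mpr ⟨?_, ?_⟩, ?_⟩
    · exact disj_prod_left d12
    · exact disj_prod_left dBP2
    · exact disj_prod_right dBP2
  have D5 : Disjoint (C1 ∪ C2 ∪ C3 ∪ C4) C5 := by
    refine Set.disjoint_union_left.mpr ⟨Set.disjoint_union_left.mpr
      ⟨Set.disjoint_union_left.mpr ⟨?_, ?_⟩, ?_⟩, ?_⟩
    · exact disj_prod_left d13
    · exact disj_prod_left dBP3
    · exact disj_prod_left d23
    · exact Disjoint.mono_left hC4sub (disj_prod_left d23)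
  have D6 : Disjoint (C1 ∪ C2 ∪ C3 ∪ C4 ∪ C5) C6 := by
    refine Set.disjoint_union_left.mpr ⟨Set.disjoint_union_left.mpr
      ⟨Set.disjoint_union_left.mpr ⟨Set.disjoint_union_left.mpr ⟨?_, ?_⟩, ?_⟩, ?_⟩, ?_⟩
    · exact disj_prod_right d13
    · exact disj_prod_right d23
    · exact disj_prod_right dBP3
    · exact Disjoint.mono_left hC4sub (disj_prod_right d23)
    · exact disj_prod_left d3.symm
  have D7 : Disjoint (C1 ∪ C2 ∪ C3 ∪ C4 ∪ C5 ∪ C6) C7 := by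
    refine Set.disjoint_union_left.mpr ⟨Set.disjoint_union_left.mpr
      ⟨Set.disjoint_union_left.mpr ⟨Set.disjoint_union_left.mpr
      ⟨Set.disjoint_union_left.mpr ⟨?_, ?_⟩, ?_⟩, ?_⟩, ?_⟩, ?_⟩
    · exact disj_prod_left d13
    · exact disj_prod_left dBP3
    · exact disj_prod_left d23
    · exact Disjoint.mono_left hC4sub (disj_prod_left d23)
    · exact disj_prod_right d3
    · exact disj_prod_left d3
  have nc1 : C1.ncard = a * a := by rw [hC1def, ncard_prod', hcard1]
  have ncBP : BP.ncard = 2 := Set.ncard_pair hbotP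
  have nc2 : C2.ncard = 2 * p ^ r := by rw [hC2def, ncard_prod', ncBP, hcard2]
  have nc3 : C3.ncard = p ^ r * 2 := by rw [hC3def, ncard_prod', ncBP, hcard2]
  have nc4 : C4.ncard = p ^ r := by
    rw [hC4def, Set.ncard_image_of_injective _ (fun x y h => congrArg Prod.fst h), hcard2]
  have nc12 : C12.ncard = a + p ^ r := by
    rw [hC12def, Set.ncard_union_eq d12 (Set.toFinite _) (Set.toFinite _), hcard1, hcard2]
  have nc5 : C5.ncard = 1 * (a + p ^ r) := by rw [hC5def, ncard_prod', hcard3, nc12]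
  have nc6 : C6.ncard = (a + p ^ r) * 1 := by rw [hC6def, ncard_prod', hcard3, nc12]
  have nc7 : C7.ncard = 1 * 1 := by rw [hC7def, ncard_prod', hcard3]
  have hnum : Nat.card {pr : Subgroup G × Subgroup G //
      (pr.1 : Set G) * (pr.2 : Set G) = (pr.2 : Set G) * (pr.1 : Set G)} =
      a * a + 2 * a + 7 * p ^ r + 1 := by
    rw [show (Nat.card {pr : Subgroup G × Subgroup G //
        (pr.1 : Set G) * (pr.2 : Set G) = (pr.2 : Set G) * (pr.1 : Set G)}) = Perm.ncard
      from Nat.card_coe_set_eq Perm]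
    rw [hPerm,
      Set.ncard_union_eq D7 (Set.toFinite _) (Set.toFinite _),
      Set.ncard_union_eq D6 (Set.toFinite _) (Set.toFinite _),
      Set.ncard_union_eq D5 (Set.toFinite _) (Set.toFinite _),
      Set.ncard_union_eq D4 (Set.toFinite _) (Set.toFinite _),
      Set.ncard_union_eq D3 (Set.toFinite _) (Set.toFinite _),
      Set.ncard_union_eq D2 (Set.toFinite _) (Set.toFinite _),
      nc1, nc2, nc3, nc4, nc5, nc6, nc7]
    ring
  rw [sd, hnum, hden]
  push_cast
  ring
end

section
/- For every prime power $q$ that is odd and $q > 3$, the projective special linear group $\mathrm{PSL}(2,q)$ contains a subgroup isomorphic to the dihedral group $D_{q+1}$ of order $q+1$. -/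
open scoped MatrixGroups

open Polynomial Matrix

set_option maxHeartbeats 1600000 in
/-- For `q` odd with `q > 3`, `PSL(2, q)` contains a dihedral subgroup of order
`q + 1` (i.e. `DihedralGroup ((q+1)/2)`, whose order is `q + 1`). -/
theorem psl_has_dihedral (F : Type*) [Field F] [Fintype F]
    (hodd : Odd (Fintype.card F)) (hq : 3 < Fintype.card F) :
    ∃ H : Subgroup (Matrix.ProjectiveSpecialLinearGroup (Fin 2) F),
      Nonempty (H ≃* DihedralGroup ((Fintype.card F + 1) / 2)) := by
  classical
  set q := Fintype.card F with hqdef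
  have hq2 : q % 2 = 1 := Nat.odd_iff.mp hodd
  have hchar2 : ringChar F ≠ 2 := by
    intro h
    have := FiniteField.even_card_of_char_two h
    omega
  have h2F : (2 : F) ≠ 0 := Ring.two_ne_zero hchar2
  -- a nonsquare d
  obtain ⟨d, hd⟩ := FiniteField.exists_nonsquare (F := F) hchar2
  have hd0 : d ≠ 0 := by rintro rfl; exact hd ⟨0, by ring⟩
  have heuler : d ^ (q / 2) = -1 := by
    rcases FiniteField.pow_dichotomy hchar2 hd0 with h | h
    · exact absurd ((FiniteField.isSquare_iff hchar2 hd0).mpr h) hd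
    · exact h
  -- the quadratic extension K = F(√d)
  have hirr : Irreducible (X ^ 2 - C d : F[X]) := by
    apply X_pow_sub_C_irreducible_of_prime Nat.prime_two
    intro b hb
    exact hd ⟨b, by rw [← hb]; ring⟩
  haveI : Fact (Irreducible (X ^ 2 - C d : F[X])) := ⟨hirr⟩
  set K := AdjoinRoot (X ^ 2 - C d : F[X]) with hK
  have hfmonic : (X ^ 2 - C d : F[X]).Monic := monic_X_pow_sub_C d two_ne_zero
  set i : F →+* K := AdjoinRoot.of _ with hi
  set rt : K := AdjoinRoot.root _ with hrt
  have hrt2 : rt ^ 2 = i d := by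
    have h := AdjoinRoot.eval₂_root (X ^ 2 - C d : F[X])
    simpa [sub_eq_zero] using h
  -- decomposition of elements of K
  have hdecomp : ∀ α : K, ∃ x y : F, α = i x + i y * rt := by
    intro α
    obtain ⟨p, rfl⟩ := AdjoinRoot.mk_surjective α
    refine ⟨(p %ₘ (X ^ 2 - C d)).coeff 0, (p %ₘ (X ^ 2 - C d)).coeff 1, ?_⟩
    have h1 : AdjoinRoot.mk (X ^ 2 - C d : F[X]) p
        = AdjoinRoot.mk (X ^ 2 - C d : F[X]) (p %ₘ (X ^ 2 - C d)) := by
      rw [AdjoinRoot.mk_eq_mk]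
      rw [Polynomial.modByMonic_eq_sub_mul_div p (X ^ 2 - C d)]
      exact ⟨p /ₘ (X ^ 2 - C d), by ring⟩
    have hdeg : (p %ₘ (X ^ 2 - C d)).degree ≤ 1 := by
      have := Polynomial.degree_modByMonic_lt p hfmonic
      rw [Polynomial.degree_X_pow_sub_C (by norm_num) d] at this
      by_cases hp : p %ₘ (X ^ 2 - C d) = 0
      · simp [hp]
      · rw [Polynomial.degree_eq_natDegree hp] at this ⊢
        exact_mod_cast Nat.lt_succ_iff.mp (by exact_mod_cast this)
    rw [h1]
    conv_lhs => rw [Polynomial.eq_X_add_C_of_degree_le_one hdeg]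
    simp only [_root_.map_add, _root_.map_mul, AdjoinRoot.mk_C, AdjoinRoot.mk_X]
    ring
  have hipow : ∀ (x : F) (n : ℕ), (i x) ^ n = i (x ^ n) := fun x n => (map_pow i x n).symm
  -- Frobenius: raising to the q-th power is "conjugation"
  have hrtq : rt ^ q = - rt := by
    have hq1 : q - 1 = 2 * (q / 2) := by omega
    calc rt ^ q = rt ^ (q - 1) * rt := by rw [← pow_succ]; congr 1; omega
    _ = (rt ^ 2) ^ (q / 2) * rt := by rw [← pow_mul, ← hq1]
    _ = i (d ^ (q / 2)) * rt := by rw [hrt2, hipow]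
    _ = - rt := by rw [heuler]; simp; ring
  have hfrob : ∀ x y : F, (i x + i y * rt) ^ q = i x - i y * rt := by
    intro x y
    have hp := ringChar.charP F
    set p := ringChar F with hp'
    obtain ⟨n, hpprime, hcard⟩ := FiniteField.card F p
    haveI : Fact p.Prime := ⟨hpprime⟩
    haveI : CharP K p := charP_of_injective_ringHom i.injective p
    rw [hqdef, hcard, add_pow_char_pow]
    rw [← hcard, ← hqdef]
    rw [mul_pow, hipow, hipow, FiniteField.pow_card, FiniteField.pow_card, hrtq]
    ring
  -- the norm identity
  have hnorm : ∀ x y : F, (i x + i y * rt) * (i x - i y * rt) = i (x ^ 2 - d * y ^ 2) := by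
    intro x y
    have : (i x + i y * rt) * (i x - i y * rt) = i x * i x - i y * i y * rt ^ 2 := by ring
    rw [this, hrt2, ← _root_.map_mul, ← _root_.map_mul, ← _root_.map_mul, ← _root_.map_sub]
    congr 1
    ring
  -- K is a finite field of cardinality q^2
  have hdeg2 : (X ^ 2 - C d : F[X]).natDegree = 2 := by rw [natDegree_X_pow_sub_C]
  have bAux := AdjoinRoot.powerBasisAux' hfmonic
  rw [hdeg2] at bAux
  haveI : Fintype K := Module.fintypeOfFintype bAux
  have hcardK : Fintype.card K = q ^ 2 := by
    rw [Module.card_fintype bAux, Fintype.card_fin]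
  have hcardU : Fintype.card Kˣ = q ^ 2 - 1 := by rw [Fintype.card_units, hcardK]
  -- an element g of order q+1 in Kˣ
  obtain ⟨g0, hg0⟩ := IsCyclic.exists_generator (α := Kˣ)
  have hordg0 : orderOf g0 = q ^ 2 - 1 := by
    rw [orderOf_eq_card_of_forall_mem_zpowers hg0, Nat.card_eq_fintype_card, hcardU]
  set g : Kˣ := g0 ^ (q - 1) with hg
  have hordg : orderOf g = q + 1 := by
    rw [hg, orderOf_pow, hordg0]
    have key : ∀ n : ℕ, 3 < n → n ^ 2 - 1 = (n - 1) * (n + 1) := by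
      intro n hn
      obtain ⟨k, rfl⟩ : ∃ k, n = k + 1 := ⟨n - 1, by omega⟩
      simp only [Nat.add_sub_cancel]
      rw [Nat.sub_eq_iff_eq_add (by nlinarith)]
      ring
    have h1 : q ^ 2 - 1 = (q - 1) * (q + 1) := key q hq
    have h2 : ((q - 1) * (q + 1)).gcd (q - 1) = q - 1 := Nat.gcd_eq_right (Dvd.intro _ rfl)
    rw [h1, h2, Nat.mul_div_cancel_left _ (by omega)]
  -- coordinates of g
  obtain ⟨x, y, hgxy⟩ := hdecomp (g : K)
  have hgq1 : (g : K) ^ (q + 1) = 1 := by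
    have h : g ^ (q + 1) = 1 := by rw [← hordg]; exact pow_orderOf_eq_one g
    rw [← Units.val_pow_eq_pow_val, h, Units.val_one]
  have hG1 : x ^ 2 - d * y ^ 2 = 1 := by
    apply i.injective
    rw [_root_.map_one, ← hnorm x y]
    have e1 : (i x + i y * rt) * (i x - i y * rt) = (g : K) ^ (q + 1) := by
      rw [← hfrob x y, ← hgxy]
      exact (pow_succ' _ _).symm
    rw [e1, hgq1]
  -- matrix realization
  set j : F →+* Matrix (Fin 2) (Fin 2) F := algebraMap F (Matrix (Fin 2) (Fin 2) F) with hj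
  have hjx : ∀ x : F, j x = !![x, 0; 0, x] := by
    intro x
    ext a b
    fin_cases a <;> fin_cases b <;>
      simp [hj, Matrix.algebraMap_matrix_apply, Matrix.one_apply]
  have hcomm : ∀ a : F, Commute (j a) (!![0, d; 1, 0] : Matrix (Fin 2) (Fin 2) F) := by
    intro a
    rw [Commute, SemiconjBy, hjx]
    ext u v
    fin_cases u <;> fin_cases v <;> simp [Matrix.mul_fin_two, mul_comm]
  set φ' : F[X] →+* Matrix (Fin 2) (Fin 2) F := eval₂RingHom' j !![0, d; 1, 0] hcomm with hφ'
  have hφ'f : φ' (X ^ 2 - C d) = 0 := by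
    show eval₂ j _ (X ^ 2 - C d) = 0
    simp only [eval₂_sub, eval₂_pow, eval₂_X, eval₂_C, pow_two]
    ext u v
    fin_cases u <;> fin_cases v <;> simp [hjx, Matrix.mul_fin_two]
  set φ : K →+* Matrix (Fin 2) (Fin 2) F := Ideal.Quotient.lift _ φ' (by
    intro a ha
    rw [Ideal.mem_span_singleton] at ha
    obtain ⟨c, rfl⟩ := ha
    rw [_root_.map_mul, hφ'f, zero_mul]) with hφ
  have hφmat : ∀ x y : F, φ (i x + i y * rt) = !![x, d * y; y, x] := by
    intro x y
    rw [_root_.map_add, _root_.map_mul, hi, hrt]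
    show eval₂ j _ (Polynomial.C x) + eval₂ j _ (Polynomial.C y) * eval₂ j _ X = _
    simp only [eval₂_C, eval₂_X]
    ext u v
    fin_cases u <;> fin_cases v <;> simp [hjx, Matrix.mul_fin_two, mul_comm]
  have hφinj : Function.Injective φ := φ.injective
  -- the SL₂ element G coming from g
  have hdetG : (!![x, d * y; y, x] : Matrix (Fin 2) (Fin 2) F).det = 1 := by
    rw [Matrix.det_fin_two_of]
    linear_combination hG1
  set Ggl : Matrix.SpecialLinearGroup (Fin 2) F := ⟨!![x, d * y; y, x], hdetG⟩ with hGgl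
  -- the reflection element S
  obtain ⟨s, u, hsu⟩ : ∃ s u : F, s ^ 2 - d * u ^ 2 = -1 := by
    obtain ⟨s, u, hsu⟩ := FiniteField.exists_root_sum_quadratic
      (f := X ^ 2 + Polynomial.C 1) (g := Polynomial.C (-d) * X ^ 2)
      (by compute_degree!)
      (by rw [Polynomial.degree_C_mul (by simpa using hd0), Polynomial.degree_X_pow]; rfl) hq2
    refine ⟨s, u, ?_⟩
    simp only [eval_add, eval_mul, eval_pow, eval_X, eval_C] at hsu
    linear_combination hsu
  have hdetS : (!![s, -(d * u); u, -s] : Matrix (Fin 2) (Fin 2) F).det = 1 := by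
    rw [Matrix.det_fin_two_of]
    linear_combination -hsu
  set Sgl : Matrix.SpecialLinearGroup (Fin 2) F := ⟨!![s, -(d * u); u, -s], hdetS⟩ with hSgl
  -- key matrix identities
  have hGSG : Ggl * Sgl * Ggl = Sgl := by
    apply Subtype.ext
    show !![x, d * y; y, x] * !![s, -(d * u); u, -s] * !![x, d * y; y, x] = !![s, -(d * u); u, -s]
    ext a c
    fin_cases a <;> fin_cases c <;> simp [Matrix.mul_apply, Fin.sum_univ_two]
    all_goals first
      | linear_combination s * hG1
      | linear_combination (-(d*u)) * hG1
      | linear_combination u * hG1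
      | linear_combination (-s) * hG1
      | ring
  have hSS : (Sgl * Sgl).val = -1 := by
    show !![s, -(d * u); u, -s] * !![s, -(d * u); u, -s] = -(1 : Matrix (Fin 2) (Fin 2) F)
    ext a c
    fin_cases a <;> fin_cases c <;> simp [Matrix.mul_apply, Fin.sum_univ_two, Matrix.one_apply]
    all_goals first
      | linear_combination hsu
      | linear_combination -hsu
      | ring
  -- center of SL₂
  have hcenter : ∀ A : Matrix.SpecialLinearGroup (Fin 2) F,
      A ∈ Subgroup.center (Matrix.SpecialLinearGroup (Fin 2) F) ↔
        A.val = 1 ∨ A.val = -1 := by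
    intro A
    rw [Matrix.SpecialLinearGroup.mem_center_iff]
    constructor
    · rintro ⟨r, hr, hrA⟩
      rcases mul_self_eq_one_iff.mp (by simpa [pow_two, Fintype.card_fin] using hr) with h | h
      · left; rw [← hrA, h]; simp
      · right
        rw [← hrA, h]
        ext a c
        by_cases hac : a = c <;> simp [Matrix.scalar_apply, Matrix.diagonal_apply, Matrix.one_apply, hac]
    · rintro (h | h)
      · exact ⟨1, by simp, by rw [h]; simp⟩
      · refine ⟨-1, by simp [Fintype.card_fin], ?_⟩
        rw [h]
        ext a c
        by_cases hac : a = c <;> simp [Matrix.scalar_apply, Matrix.diagonal_apply, Matrix.one_apply, hac]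
  -- pass to PSL
  set π : Matrix.SpecialLinearGroup (Fin 2) F →*
      Matrix.ProjectiveSpecialLinearGroup (Fin 2) F :=
    QuotientGroup.mk' (Subgroup.center (Matrix.SpecialLinearGroup (Fin 2) F)) with hπ
  set a : Matrix.ProjectiveSpecialLinearGroup (Fin 2) F := π Ggl with ha
  set b : Matrix.ProjectiveSpecialLinearGroup (Fin 2) F := π Sgl with hb
  set m : ℕ := (q + 1) / 2 with hm
  have hm2 : 2 * m = q + 1 := by omega
  have hm3 : 3 ≤ m := by omega
  haveI : NeZero m := ⟨by omega⟩
  -- φ of powers of g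
  have hφg : φ (g : K) = Ggl.val := by rw [hgxy, hφmat]
  have hGk : ∀ k : ℕ, (Ggl ^ k).val = φ ((g : K) ^ k) := by
    intro k
    rw [Matrix.SpecialLinearGroup.coe_pow, ← hφg, ← _root_.map_pow]
  -- order of a
  have horder : ∀ k : ℕ, a ^ k = 1 ↔ m ∣ k := by
    intro k
    rw [ha, ← map_pow, hπ, QuotientGroup.mk'_apply, QuotientGroup.eq_one_iff, hcenter, hGk]
    have h1 : φ ((g : K) ^ k) = 1 ↔ (g : K) ^ k = 1 := by
      constructor
      · intro h; apply hφinj; rw [h, _root_.map_one]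
      · intro h; rw [h, _root_.map_one]
    have h2 : φ ((g : K) ^ k) = -1 ↔ (g : K) ^ k = -1 := by
      constructor
      · intro h; apply hφinj; rw [h, _root_.map_neg, _root_.map_one]
      · intro h; rw [h, _root_.map_neg, _root_.map_one]
    rw [h1, h2]
    have h3 : ((g : K) ^ k = 1 ∨ (g : K) ^ k = -1) ↔ (g : K) ^ (2 * k) = 1 := by
      constructor
      · rintro (h | h) <;> rw [mul_comm, pow_mul, h] <;> ring
      · intro h
        exact mul_self_eq_one_iff.mp (by rw [← pow_add, ← two_mul]; exact h)
    rw [h3]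
    have h4 : (g : K) ^ (2 * k) = 1 ↔ g ^ (2 * k) = 1 := by
      rw [← Units.val_pow_eq_pow_val, Units.val_eq_one]
    rw [h4, ← orderOf_dvd_iff_pow_eq_one, hordg, ← hm2]
    exact Nat.mul_dvd_mul_iff_left (by norm_num : 0 < 2)
  have ham : a ^ m = 1 := (horder m).mpr dvd_rfl
  -- b is an involution
  have hb2 : b * b = 1 := by
    rw [hb, ← _root_.map_mul, hπ, QuotientGroup.mk'_apply, QuotientGroup.eq_one_iff, hcenter]
    right; exact hSS
  -- the dihedral relation
  have haba : a * b * a = b := by rw [ha, hb, ← _root_.map_mul, ← _root_.map_mul, hGSG]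
  have hbab : b * a * b = a⁻¹ := by
    have h1 : b⁻¹ = b := inv_eq_of_mul_eq_one_right hb2
    have h2 : b⁻¹ * (a * b * a) = b⁻¹ * b := by rw [haba]
    rw [inv_mul_cancel] at h2
    calc b * a * b = b⁻¹ * (a * b) := by rw [h1]; group
    _ = b⁻¹ * (a * b * a) * a⁻¹ := by group
    _ = a⁻¹ := by rw [h2]; group
  have hbpow : ∀ n : ℕ, b * a ^ n * b = (a ^ n)⁻¹ := by
    intro n
    induction n with
    | zero => simpa using hb2
    | succ n ih =>
      have : b * a ^ (n + 1) * b = (b * a ^ n * b) * (b * a * b) := by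
        rw [pow_succ]
        calc b * (a ^ n * a) * b = b * a ^ n * (b * b) * a * b := by rw [hb2]; group
        _ = (b * a ^ n * b) * (b * a * b) := by group
      rw [this, ih, hbab, pow_succ, _root_.mul_inv_rev]
      exact (((Commute.refl a).pow_left n).inv_inv).eq
  -- b is not a power of a
  have hbnot : ∀ k : ℕ, b ≠ a ^ k := by
    intro k hbk
    have h0 : π (Sgl⁻¹ * Ggl ^ k) = 1 := by
      rw [_root_.map_mul, _root_.map_inv, _root_.map_pow, ← ha, ← hb, hbk, inv_mul_cancel]
    rw [hπ, QuotientGroup.mk'_apply] at h0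
    have h1 : Sgl⁻¹ * Ggl ^ k ∈ Subgroup.center (Matrix.SpecialLinearGroup (Fin 2) F) :=
      (QuotientGroup.eq_one_iff _).mp h0
    rw [hcenter] at h1
    obtain ⟨x', y', hxy'⟩ := hdecomp ((g : K) ^ k)
    have hφk : (Ggl ^ k).val = !![x', d * y'; y', x'] := by rw [hGk, hxy', hφmat]
    have hSglv : Sgl.val = !![s, -(d * u); u, -s] := rfl
    have e : (Ggl ^ k).val = Sgl.val * (Sgl⁻¹ * Ggl ^ k).val := by
      rw [← Matrix.SpecialLinearGroup.coe_mul]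
      congr 1
      exact (mul_inv_cancel_left Sgl _).symm
    have hs0 : s = 0 ∧ u = 0 := by
      rcases h1 with h | h
      · rw [h, mul_one, hφk, hSglv] at e
        have e00 : x' = s := by simpa using congr_fun (congr_fun e 0) 0
        have e11 : x' = -s := by simpa using congr_fun (congr_fun e 1) 1
        have e10 : y' = u := by simpa using congr_fun (congr_fun e 1) 0
        have e01 : d * y' = -(d * u) := by simpa using congr_fun (congr_fun e 0) 1
        have h2s : 2 * s = 0 := by first | linear_combination e00 - e11 | linear_combination e11 - e00
        have hs : s = 0 := by
          rcases mul_eq_zero.mp h2s with h' | h'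
          · exact absurd h' h2F
          · exact h'
        have h2du : 2 * (d * u) = 0 := by first | linear_combination (-d) * e10 - e01 | linear_combination d * e10 + e01 | linear_combination (-d) * e10 + e01 | linear_combination d * e10 - e01
        have hdu : d * u = 0 := by
          rcases mul_eq_zero.mp h2du with h' | h'
          · exact absurd h' h2F
          · exact h'
        have hu : u = 0 := by
          rcases mul_eq_zero.mp hdu with h' | h'
          · exact absurd h' hd0
          · exact h'
        exact ⟨hs, hu⟩
      · rw [h, hφk, hSglv] at e
        have e00 : x' = -s := by simpa using congr_fun (congr_fun e 0) 0
        have e11 : x' = s := by simpa using congr_fun (congr_fun e 1) 1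
        have e10 : y' = -u := by simpa using congr_fun (congr_fun e 1) 0
        have e01 : d * y' = d * u := by simpa using congr_fun (congr_fun e 0) 1
        have h2s : 2 * s = 0 := by first | linear_combination e00 - e11 | linear_combination e11 - e00
        have hs : s = 0 := by
          rcases mul_eq_zero.mp h2s with h' | h'
          · exact absurd h' h2F
          · exact h'
        have h2du : 2 * (d * u) = 0 := by first | linear_combination (-d) * e10 - e01 | linear_combination d * e10 + e01 | linear_combination (-d) * e10 + e01 | linear_combination d * e10 - e01
        have hdu : d * u = 0 := by
          rcases mul_eq_zero.mp h2du with h' | h'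
          · exact absurd h' h2F
          · exact h'
        have hu : u = 0 := by
          rcases mul_eq_zero.mp hdu with h' | h'
          · exact absurd h' hd0
          · exact h'
        exact ⟨hs, hu⟩
    rw [hs0.1, hs0.2] at hsu
    have : (1 : F) = 0 := by first | linear_combination -hsu | linear_combination hsu
    exact one_ne_zero this
  -- the rotation map
  set A : ZMod m → Matrix.ProjectiveSpecialLinearGroup (Fin 2) F :=
    fun i0 => a ^ i0.val with hA
  have hpow_mod : ∀ n : ℕ, a ^ (n % m) = a ^ n := by
    intro n
    conv_rhs => rw [← Nat.mod_add_div n m]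
    rw [pow_add, pow_mul, ham, one_pow, mul_one]
  have hA_add : ∀ i0 j0 : ZMod m, A (i0 + j0) = A i0 * A j0 := by
    intro i0 j0
    simp only [hA]
    rw [ZMod.val_add, hpow_mod, pow_add]
  have hA0 : A 0 = 1 := by simp only [hA, ZMod.val_zero, pow_zero]
  have hAneg : ∀ i0 : ZMod m, A (-i0) = (A i0)⁻¹ := by
    intro i0
    have h : A (-i0) * A i0 = 1 := by rw [← hA_add, neg_add_cancel, hA0]
    exact eq_inv_of_mul_eq_one_left h
  have hAb : ∀ i0 : ZMod m, A i0 * b = b * (A i0)⁻¹ := by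
    intro i0
    have h := hbpow i0.val
    calc A i0 * b = b * (b * A i0 * b) := by
          rw [← mul_assoc, ← mul_assoc, hb2, one_mul]
    _ = b * (A i0)⁻¹ := by
          simp only [hA]
          rw [hbpow i0.val]
  -- the dihedral homomorphism
  set f : DihedralGroup m →* Matrix.ProjectiveSpecialLinearGroup (Fin 2) F :=
    MonoidHom.mk' (fun w => match w with
      | DihedralGroup.r i0 => A i0
      | DihedralGroup.sr i0 => b * A i0) (by
        rintro (i0 | i0) (j0 | j0)
        · show A (i0 + j0) = A i0 * A j0
          exact hA_add i0 j0
        · show b * A (j0 - i0) = A i0 * (b * A j0)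
          rw [← mul_assoc, hAb, mul_assoc, ← hAneg, ← hA_add]
          congr 2
          ring
        · show b * A (i0 + j0) = (b * A i0) * A j0
          rw [mul_assoc, ← hA_add]
        · show A (j0 - i0) = (b * A i0) * (b * A j0)
          rw [mul_assoc, ← mul_assoc (A i0) b, hAb, ← mul_assoc, ← mul_assoc, hb2, one_mul,
            ← hAneg, ← hA_add]
          congr 1
          ring) with hf
  have hinj : Function.Injective f := by
    rw [injective_iff_map_eq_one]
    rintro (i0 | i0) h
    · have h' : A i0 = 1 := h
      have hdvd : m ∣ i0.val := by
        apply (horder i0.val).mp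
        simpa only [hA] using h'
      have hval : i0.val = 0 := Nat.eq_zero_of_dvd_of_lt hdvd (ZMod.val_lt i0)
      rw [DihedralGroup.one_def]
      congr 1
      exact (ZMod.val_eq_zero i0).mp hval
    · exfalso
      have h' : b * A i0 = 1 := h
      have hb' : b = (A i0)⁻¹ := eq_inv_of_mul_eq_one_left h'
      rw [← hAneg] at hb'
      exact hbnot ((-i0).val) hb'
  exact ⟨f.range, ⟨(MonoidHom.ofInjective hinj).symm⟩⟩
end
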